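/- arXiv:math/0303124 — 2 statements merged into one kernel-verified Lean document; each statement's English description precedes it below -/
import Mathlib

section
/- Let N ≥ 2. In B_sp^− with the type-D_N Kashiwara operators, the sequence (+,…,+,−) (all entries + except the last, which is −) is the unique element b with f̃_l b = 0 for all 1 ≤ l ≤ N, and every element of B_sp^− is of the form ẽ_{l_1} ẽ_{l_2} ⋯ ẽ_{l_p}(+,…,+,−) for some p ≥ 0 and l_1,…,l_p ∈ {1,…,N}. -/
namespace CrystalPaper

/-- A sign sequence of length `N`: `true` codes `+`, `false` codes `−`. -/
abbrev Seq (N : ℕ) := Fin N → Bool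

/-- The constant sequence `(+,…,+)`. -/
def top (N : ℕ) : Seq N := fun _ => true

/-- The constant sequence `(−,…,−)`. -/
def bot (N : ℕ) : Seq N := fun _ => false

/-- The sequence `(+^k, −^{N−k})` (first `k` entries `+`, the rest `−`). -/
def lowSeq (N k : ℕ) : Seq N := fun i => decide ((i : ℕ) < k)

/-- The number of `−` entries of a sign sequence. -/
def minusCount (N : ℕ) (b : Seq N) : ℕ :=
  (Finset.univ.filter (fun i => b i = false)).card

/-- `B_sp^+`: sign sequences with an even number of `−` entries. -/
def BspPlus (N : ℕ) (b : Seq N) : Prop := Even (minusCount N b)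

/-- `B_sp^−`: sign sequences with an odd number of `−` entries. -/
def BspMinus (N : ℕ) (b : Seq N) : Prop := Odd (minusCount N b)

/-- The type-`D_N` Kashiwara raising operator `ẽ_l`, labels `1 ≤ l ≤ N`
(`none` codes `0`).  For `1 ≤ l ≤ N−1` it replaces `(b_l, b_{l+1}) = (+,−)` by `(−,+)`;
`ẽ_N` replaces `(b_{N−1}, b_N) = (+,+)` by `(−,−)`. -/
def eD (N l : ℕ) (b : Seq N) : Option (Seq N) :=
  if h : 1 ≤ l ∧ l + 1 ≤ N then
    let i : Fin N := ⟨l - 1, by omega⟩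
    let j : Fin N := ⟨l, by omega⟩
    if b i = true ∧ b j = false then
      some (Function.update (Function.update b i false) j true)
    else none
  else if h2 : l = N ∧ 2 ≤ N then
    let i : Fin N := ⟨N - 2, by omega⟩
    let j : Fin N := ⟨N - 1, by omega⟩
    if b i = true ∧ b j = true then
      some (Function.update (Function.update b i false) j false)
    else none
  else none

/-- The type-`D_N` Kashiwara lowering operator `f̃_l`, labels `1 ≤ l ≤ N`.
For `1 ≤ l ≤ N−1` it replaces `(b_l, b_{l+1}) = (−,+)` by `(+,−)`;
`f̃_N` replaces `(b_{N−1}, b_N) = (−,−)` by `(+,+)`. -/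
def fD (N l : ℕ) (b : Seq N) : Option (Seq N) :=
  if h : 1 ≤ l ∧ l + 1 ≤ N then
    let i : Fin N := ⟨l - 1, by omega⟩
    let j : Fin N := ⟨l, by omega⟩
    if b i = false ∧ b j = true then
      some (Function.update (Function.update b i true) j false)
    else none
  else if h2 : l = N ∧ 2 ≤ N then
    let i : Fin N := ⟨N - 2, by omega⟩
    let j : Fin N := ⟨N - 1, by omega⟩
    if b i = false ∧ b j = false then
      some (Function.update (Function.update b i true) j true)
    else none
  else none

section Aux

open Finset

/-- Weight measure that strictly decreases under every `f̃_l` step. -/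
def Mw (N : ℕ) (b : Seq N) : ℕ := ∑ k, (if b k = false then 2 * N - (k : ℕ) else 0)

lemma sum_update₂ {N : ℕ} (b : Seq N) (i j : Fin N) (hij : i ≠ j)
    (x y : Bool) (F : Fin N → Bool → ℕ) :
    (∑ k, F k ((Function.update (Function.update b i x) j y) k)) + F i (b i) + F j (b j)
      = (∑ k, F k (b k)) + F i x + F j y := by
  have hfun : (fun k => F k ((Function.update (Function.update b i x) j y) k))
      = Function.update (Function.update (fun k => F k (b k)) i (F i x)) j (F j y) := by
    funext k
    simp only [Function.update_apply]
    split_ifs with h1 h2 <;> subst_vars <;> rfl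
  have hi : i ∈ (Finset.univ : Finset (Fin N)) \ {j} := by simp [hij]
  calc (∑ k, F k ((Function.update (Function.update b i x) j y) k)) + F i (b i) + F j (b j)
      = (F j y + (F i x + ∑ k ∈ (Finset.univ \ {j}) \ {i}, F k (b k))) + F i (b i) + F j (b j) := by
        rw [hfun, Finset.sum_update_of_mem (Finset.mem_univ j),
          Finset.sum_update_of_mem hi]
    _ = (∑ k, F k (b k)) + F i x + F j y := by
        rw [Finset.sum_eq_add_sum_sdiff_singleton_of_mem (Finset.mem_univ j) (fun k => F k (b k)),
          Finset.sum_eq_add_sum_sdiff_singleton_of_mem hi (fun k => F k (b k))]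
        ring

lemma minusCount_eq_sum {N : ℕ} (b : Seq N) :
    minusCount N b = ∑ k, (if b k = false then 1 else 0) := by
  simpa [minusCount] using Finset.card_filter (fun i => b i = false) (Finset.univ : Finset (Fin N))

/-- Every `fD` step: is inverted by `eD`, preserves parity of the minus count,
and strictly decreases the weight. -/
lemma fD_step {N l : ℕ} {b b' : Seq N} (h : fD N l b = some b') :
    eD N l b' = some b ∧ minusCount N b' % 2 = minusCount N b % 2 ∧ Mw N b' < Mw N b := by
  by_cases hc : 1 ≤ l ∧ l + 1 ≤ N
  · set i : Fin N := ⟨l - 1, by omega⟩ with hidef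
    set j : Fin N := ⟨l, by omega⟩ with hjdef
    have hij : i ≠ j := by
      simp only [hidef, hjdef, Fin.ne_iff_vne]; omega
    rw [fD, dif_pos hc] at h
    dsimp only at h
    split_ifs at h with hcond
    · obtain ⟨hbi, hbj⟩ := hcond
      have hb' : Function.update (Function.update b i true) j false = b' :=
        Option.some.inj h
      subst hb'
      refine ⟨?_, ?_, ?_⟩
      · have hb'i : Function.update (Function.update b i true) j false i = true := by
          rw [Function.update_of_ne hij, Function.update_self]
        have hb'j : Function.update (Function.update b i true) j false j = false := by
          simp
        rw [eD, dif_pos hc]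
        dsimp only
        rw [if_pos ⟨hb'i, hb'j⟩]
        congr 1
        funext k
        simp only [Function.update_apply]
        split_ifs <;> simp_all
      · rw [minusCount_eq_sum, minusCount_eq_sum]
        have hs := sum_update₂ b i j hij true false (fun k v => if v = false then 1 else 0)
        simp only [show b i = false from hbi, show b j = true from hbj, Bool.true_eq_false, reduceIte] at hs
        omega
      · rw [Mw, Mw]
        have hs := sum_update₂ b i j hij true false
          (fun k v => if v = false then 2 * N - (k : ℕ) else 0)
        simp only [show b i = false from hbi, show b j = true from hbj] at hs
        norm_num at hs
        have h1 : 1 ≤ l := hc.1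
        have h2 : l + 1 ≤ N := hc.2
        have hiv : (i : ℕ) = l - 1 := rfl
        have hjv : (j : ℕ) = l := rfl
        omega
  · by_cases hc2 : l = N ∧ 2 ≤ N
    · set i : Fin N := ⟨N - 2, by omega⟩ with hidef
      set j : Fin N := ⟨N - 1, by omega⟩ with hjdef
      have hij : i ≠ j := by
        simp only [hidef, hjdef, Fin.ne_iff_vne]; omega
      rw [fD, dif_neg hc, dif_pos hc2] at h
      dsimp only at h
      split_ifs at h with hcond
      · obtain ⟨hbi, hbj⟩ := hcond
        have hb' : Function.update (Function.update b i true) j true = b' :=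
          Option.some.inj h
        subst hb'
        refine ⟨?_, ?_, ?_⟩
        · have hb'i : Function.update (Function.update b i true) j true i = true := by
            rw [Function.update_of_ne hij, Function.update_self]
          have hb'j : Function.update (Function.update b i true) j true j = true := by
            simp
          rw [eD, dif_neg hc, dif_pos hc2]
          dsimp only
          rw [if_pos ⟨hb'i, hb'j⟩]
          congr 1
          funext k
          simp only [Function.update_apply]
          split_ifs <;> simp_all
        · rw [minusCount_eq_sum, minusCount_eq_sum]
          have hs := sum_update₂ b i j hij true true (fun k v => if v = false then 1 else 0)
          simp only [show b i = false from hbi, show b j = false from hbj, Bool.true_eq_false, reduceIte] at hs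
          omega
        · rw [Mw, Mw]
          have hs := sum_update₂ b i j hij true true
            (fun k v => if v = false then 2 * N - (k : ℕ) else 0)
          simp only [show b i = false from hbi, show b j = false from hbj] at hs
          norm_num at hs
          have h2 : 2 ≤ N := hc2.2
          omega
    · rw [fD, dif_neg hc, dif_neg hc2] at h
      exact absurd h (by simp)

/-- If all lowering operators vanish on an element of `B_sp^−`, it is `(+,…,+,−)`. -/
lemma lowest_char {N : ℕ} (hN : 2 ≤ N) (b : Seq N) (hb : BspMinus N b)
    (hf : ∀ l, 1 ≤ l → l ≤ N → fD N l b = none) : b = lowSeq N (N - 1) := by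
  have nopat : ∀ m : ℕ, (hm : m + 1 < N) → b ⟨m, by omega⟩ = false → b ⟨m + 1, hm⟩ = false := by
    intro m hm hbm
    by_contra hcon
    have hcon' : b ⟨m + 1, hm⟩ = true := by
      cases hx : b ⟨m + 1, hm⟩ <;> simp_all
    have h := hf (m + 1) (by omega) (by omega)
    rw [fD, dif_pos (⟨by omega, by omega⟩ : 1 ≤ m + 1 ∧ m + 1 + 1 ≤ N)] at h
    dsimp only at h
    have hi : b ⟨m + 1 - 1, by omega⟩ = false := hbm
    rw [if_pos ⟨hi, hcon'⟩] at h
    exact absurd h (by simp)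
  have up : ∀ m : ℕ, (hm : m < N) → ∀ k : ℕ, (hk : k < N) → b ⟨k, hk⟩ = false → k ≤ m →
      b ⟨m, hm⟩ = false := by
    intro m
    induction m with
    | zero =>
      intro hm k hk hbk hkm
      have : k = 0 := by omega
      subst this; exact hbk
    | succ n ih =>
      intro hm k hk hbk hkm
      rcases Nat.lt_or_ge k (n + 1) with h | h
      · exact nopat n hm (ih (by omega) k hk hbk (by omega))
      · have : k = n + 1 := by omega
        subst this; exact hbk
  -- there is some minus entry
  have hpos : 0 < minusCount N b := by
    rcases hb with ⟨c, hc⟩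
    omega
  obtain ⟨m, hm⟩ := Finset.card_pos.mp hpos
  rw [Finset.mem_filter] at hm
  have hbm : b m = false := hm.2
  have hlast : b ⟨N - 1, by omega⟩ = false :=
    up (N - 1) (by omega) m.val m.isLt (by simpa using hbm) (by omega)
  -- f_N = none forces b (N-2) = true
  have hfN := hf N (by omega) le_rfl
  rw [fD, dif_neg (by omega : ¬(1 ≤ N ∧ N + 1 ≤ N)), dif_pos ⟨rfl, hN⟩] at hfN
  dsimp only at hfN
  have hN2 : b ⟨N - 2, by omega⟩ = true := by
    by_contra hx
    have hx' : b ⟨N - 2, by omega⟩ = false := by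
      cases hy : b ⟨N - 2, by omega⟩ <;> simp_all
    rw [if_pos ⟨hx', hlast⟩] at hfN
    exact absurd hfN (by simp)
  -- all entries before N-1 are true
  have hall : ∀ k : ℕ, (hk : k < N - 1) → b ⟨k, by omega⟩ = true := by
    intro k hk
    by_contra hx
    have hx' : b ⟨k, by omega⟩ = false := by
      cases hy : b ⟨k, by omega⟩ <;> simp_all
    have := up (N - 2) (by omega) k (by omega) hx' (by omega)
    rw [this] at hN2
    exact Bool.false_ne_true hN2
  funext k
  rcases Nat.lt_or_ge k.val (N - 1) with h | h
  · have := hall k.val h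
    simp only [lowSeq, h, decide_true]
    simpa using this
  · have hk : (k : ℕ) = N - 1 := by omega
    have : b k = false := by
      have := hlast
      have hkk : k = ⟨N - 1, by omega⟩ := by
        apply Fin.ext; simpa using hk
      rw [hkk]; exact this
    simp only [lowSeq, hk]
    rw [this]
    simp

lemma fD_lowSeq {N : ℕ} (hN : 2 ≤ N) (l : ℕ) (hl1 : 1 ≤ l) (hl2 : l ≤ N) :
    fD N l (lowSeq N (N - 1)) = none := by
  by_cases hc : l + 1 ≤ N
  · rw [fD, dif_pos ⟨hl1, hc⟩]
    dsimp only
    rw [if_neg]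
    rintro ⟨h1, h2⟩
    simp only [lowSeq, decide_eq_false_iff_not, not_lt] at h1
    omega
  · have hlN : l = N := by omega
    rw [fD, dif_neg (by omega : ¬(1 ≤ l ∧ l + 1 ≤ N)), dif_pos ⟨hlN, hN⟩]
    dsimp only
    rw [if_neg]
    rintro ⟨h1, h2⟩
    simp only [lowSeq, decide_eq_false_iff_not, not_lt] at h1
    omega

end Aux

/-- In `B_sp^−` with the type-`D_N` Kashiwara operators (`N ≥ 2`),
`(+,…,+,−)` is the unique element killed by all `f̃_l`, `1 ≤ l ≤ N`, and every element
of `B_sp^−` is obtained from `(+,…,+,−)` by applying operators `ẽ_l`, `1 ≤ l ≤ N`. -/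
theorem BspMinus_lowest_unique_and_connected (N : ℕ) (hN : 2 ≤ N) :
    (∀ b : Seq N, BspMinus N b →
      ((∀ l, 1 ≤ l → l ≤ N → fD N l b = none) ↔ b = lowSeq N (N - 1))) ∧
    (∀ b : Seq N, BspMinus N b →
      Relation.ReflTransGen
        (fun x y => ∃ l, 1 ≤ l ∧ l ≤ N ∧ eD N l x = some y) (lowSeq N (N - 1)) b) := by
  constructor
  · intro b hb
    constructor
    · exact fun hf => lowest_char hN b hb hf
    · intro hbl l hl1 hl2
      subst hbl
      exact fD_lowSeq hN l hl1 hl2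
  · intro b hb
    have key : ∀ n : ℕ, ∀ b : Seq N, Mw N b ≤ n → BspMinus N b →
        Relation.ReflTransGen
          (fun x y => ∃ l, 1 ≤ l ∧ l ≤ N ∧ eD N l x = some y) (lowSeq N (N - 1)) b := by
      intro n
      induction n with
      | zero =>
        intro b hM hb
        by_cases hbe : b = lowSeq N (N - 1)
        · subst hbe; exact Relation.ReflTransGen.refl
        · exfalso
          have : ¬ ∀ l, 1 ≤ l → l ≤ N → fD N l b = none := fun hf => hbe (lowest_char hN b hb hf)
          push_neg at this
          obtain ⟨l, hl1, hl2, hne⟩ := this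
          obtain ⟨b', hb'⟩ := Option.ne_none_iff_exists'.mp hne
          have := (fD_step hb').2.2
          omega
      | succ n ih =>
        intro b hM hb
        by_cases hbe : b = lowSeq N (N - 1)
        · subst hbe; exact Relation.ReflTransGen.refl
        · have : ¬ ∀ l, 1 ≤ l → l ≤ N → fD N l b = none := fun hf => hbe (lowest_char hN b hb hf)
          push_neg at this
          obtain ⟨l, hl1, hl2, hne⟩ := this
          obtain ⟨b', hb'⟩ := Option.ne_none_iff_exists'.mp hne
          obtain ⟨hinv, hpar, hlt⟩ := fD_step hb'
          have hb'm : BspMinus N b' := by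
            rw [BspMinus, Nat.odd_iff] at hb ⊢
            omega
          exact (ih b' (by omega) hb'm).tail ⟨l, hl1, hl2, hinv⟩
    exact key (Mw N b) b le_rfl hb

end CrystalPaper
end

section
/- Let N ≥ 2. Equip B_sp^+ × B_sp^− with the tensor-product type-D_N Kashiwara operators. Then every element u ⊗ v of B_sp^+ × B_sp^− lies in the connected component of exactly one of the elements (+,…,+) ⊗ (+^k, −^{N−k}) with 0 ≤ k ≤ N−1 and k ≡ N−1 (mod 2), where (+^k, −^{N−k}) denotes the sign sequence whose first k entries are + and last N−k entries are −. Moreover, these elements are precisely the elements x ⊗ y with f̃_l(x ⊗ y) = 0 for all 1 ≤ l ≤ N. -/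
namespace CrystalPaper

/-- `n`-fold iteration of a partial operator. -/
def iterOp {σ : Type*} (f : σ → Option σ) : ℕ → σ → Option σ
  | 0, x => some x
  | n + 1, x => (f x).bind (iterOp f n)

/-- `max {n ≥ 0 : f^n x ≠ 0}`, as a supremum in `ℕ`.  Used for the string
lengths `ε_l(x) = max{n : ẽ_l^n x ≠ 0}` and `φ_l(x) = max{n : f̃_l^n x ≠ 0}`. -/
noncomputable def opMax {σ : Type*} (f : σ → Option σ) (x : σ) : ℕ :=
  sSup {n | iterOp f n x ≠ none}

/-- The tensor-product raising operator `ẽ_l` on pairs (lowest-weight convention):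
`ẽ_l(x ⊗ y) = x ⊗ ẽ_l y` if `ε_l(x) ≤ φ_l(y)`, and `ẽ_l x ⊗ y` otherwise. -/
noncomputable def teD (N l : ℕ) (p : Seq N × Seq N) : Option (Seq N × Seq N) :=
  if opMax (eD N l) p.1 ≤ opMax (fD N l) p.2 then (eD N l p.2).map fun y => (p.1, y)
  else (eD N l p.1).map fun x => (x, p.2)

/-- The tensor-product lowering operator `f̃_l` on pairs (lowest-weight convention):
`f̃_l(x ⊗ y) = x ⊗ f̃_l y` if `ε_l(x) < φ_l(y)`, and `f̃_l x ⊗ y` otherwise. -/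
noncomputable def tfD (N l : ℕ) (p : Seq N × Seq N) : Option (Seq N × Seq N) :=
  if opMax (eD N l) p.1 < opMax (fD N l) p.2 then (fD N l p.2).map fun y => (p.1, y)
  else (fD N l p.1).map fun x => (x, p.2)

/-- Connectedness in the tensor product of two type-`D_N` spin crystals:
the equivalence relation generated by single applications of the operators
`ẽ_l`, `f̃_l` with `1 ≤ l ≤ N`. -/
def ConnD (N : ℕ) (p q : Seq N × Seq N) : Prop :=
  Relation.EqvGen (fun p q => ∃ l, 1 ≤ l ∧ l ≤ N ∧ (teD N l p = some q ∨ tfD N l p = some q)) p q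


section Aux

variable {σ : Type*}

lemma iterOp_succ (f : σ → Option σ) (n : ℕ) (x : σ) :
    iterOp f (n+1) x = (f x).bind (iterOp f n) := rfl

lemma opMax_none (f : σ → Option σ) (x : σ) (h : f x = none) : opMax f x = 0 := by
  unfold opMax
  have hs : {n | iterOp f n x ≠ none} = {0} := by
    ext n
    simp only [Set.mem_setOf_eq, Set.mem_singleton_iff]
    constructor
    · intro hn
      by_contra h0
      obtain ⟨m, rfl⟩ : ∃ m, n = m + 1 := ⟨n-1, by omega⟩
      exact hn (by simp [iterOp_succ, h])
    · rintro rfl; simp [iterOp]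
  rw [hs, csSup_singleton]

lemma opMax_some (f : σ → Option σ) (hf : ∀ a b, f a = some b → f b = none) (x y : σ)
    (hy : f x = some y) : opMax f x = 1 := by
  unfold opMax
  have hs : {n | iterOp f n x ≠ none} = {0, 1} := by
    ext n
    simp only [Set.mem_setOf_eq, Set.mem_insert_iff, Set.mem_singleton_iff]
    constructor
    · intro hn
      by_contra h01
      push_neg at h01
      obtain ⟨m, rfl⟩ : ∃ m, n = m + 2 := ⟨n-2, by omega⟩
      apply hn
      rw [iterOp_succ, hy, Option.bind_some, iterOp_succ, hf x y hy, Option.bind_none]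
    · rintro (rfl | rfl)
      · simp [iterOp]
      · simp [iterOp_succ, hy, Option.bind_some, iterOp]
  rw [hs, csSup_pair]
  simp

end Aux

section OpChar

lemma fD_lt_eq (N l : ℕ) (h1 : 1 ≤ l) (h2 : l + 1 ≤ N) (b : Seq N) :
    fD N l b = if b ⟨l-1, by omega⟩ = false ∧ b ⟨l, by omega⟩ = true
      then some (Function.update (Function.update b ⟨l-1, by omega⟩ true) ⟨l, by omega⟩ false)
      else none := by
  unfold fD; rw [dif_pos ⟨h1, h2⟩]

lemma fD_N_eq (N : ℕ) (hN : 2 ≤ N) (b : Seq N) :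
    fD N N b = if b ⟨N-2, by omega⟩ = false ∧ b ⟨N-1, by omega⟩ = false
      then some (Function.update (Function.update b ⟨N-2, by omega⟩ true) ⟨N-1, by omega⟩ true)
      else none := by
  unfold fD; rw [dif_neg (by omega), dif_pos ⟨rfl, hN⟩]

lemma eD_lt_eq (N l : ℕ) (h1 : 1 ≤ l) (h2 : l + 1 ≤ N) (b : Seq N) :
    eD N l b = if b ⟨l-1, by omega⟩ = true ∧ b ⟨l, by omega⟩ = false
      then some (Function.update (Function.update b ⟨l-1, by omega⟩ false) ⟨l, by omega⟩ true)
      else none := by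
  unfold eD; rw [dif_pos ⟨h1, h2⟩]

lemma eD_N_eq (N : ℕ) (hN : 2 ≤ N) (b : Seq N) :
    eD N N b = if b ⟨N-2, by omega⟩ = true ∧ b ⟨N-1, by omega⟩ = true
      then some (Function.update (Function.update b ⟨N-2, by omega⟩ false) ⟨N-1, by omega⟩ false)
      else none := by
  unfold eD; rw [dif_neg (by omega), dif_pos ⟨rfl, hN⟩]

lemma fD_out (N l : ℕ) (hb : ¬ (1 ≤ l ∧ l + 1 ≤ N)) (hb2 : ¬ (l = N ∧ 2 ≤ N)) (b : Seq N) :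
    fD N l b = none := by
  unfold fD; rw [dif_neg hb, dif_neg hb2]

lemma eD_out (N l : ℕ) (hb : ¬ (1 ≤ l ∧ l + 1 ≤ N)) (hb2 : ¬ (l = N ∧ 2 ≤ N)) (b : Seq N) :
    eD N l b = none := by
  unfold eD; rw [dif_neg hb, dif_neg hb2]

lemma fD_twice (N l : ℕ) : ∀ a c, fD N l a = some c → fD N l c = none := by
  intro a c h
  by_cases hb : 1 ≤ l ∧ l + 1 ≤ N
  · have hij : (⟨l-1, by omega⟩ : Fin N) ≠ ⟨l, by omega⟩ :=
      Fin.ne_of_val_ne (show l-1 ≠ l by omega)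
    rw [fD_lt_eq N l hb.1 hb.2] at h ⊢
    split_ifs at h with hc
    obtain rfl := (Option.some.injEq _ _).mp h
    simp [Function.update_of_ne hij]
  · by_cases hb2 : l = N ∧ 2 ≤ N
    · obtain ⟨hlN, hN⟩ := hb2
      rw [hlN] at h ⊢
      have hij : (⟨N-2, by omega⟩ : Fin N) ≠ ⟨N-1, by omega⟩ :=
        Fin.ne_of_val_ne (show N-2 ≠ N-1 by omega)
      rw [fD_N_eq N hN] at h ⊢
      split_ifs at h with hc
      obtain rfl := (Option.some.injEq _ _).mp h
      simp [Function.update_of_ne hij]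
    · rw [fD_out N l hb hb2] at h; exact absurd h (by simp)

lemma eD_twice (N l : ℕ) : ∀ a c, eD N l a = some c → eD N l c = none := by
  intro a c h
  by_cases hb : 1 ≤ l ∧ l + 1 ≤ N
  · have hij : (⟨l-1, by omega⟩ : Fin N) ≠ ⟨l, by omega⟩ :=
      Fin.ne_of_val_ne (show l-1 ≠ l by omega)
    rw [eD_lt_eq N l hb.1 hb.2] at h ⊢
    split_ifs at h with hc
    obtain rfl := (Option.some.injEq _ _).mp h
    simp [Function.update_of_ne hij]
  · by_cases hb2 : l = N ∧ 2 ≤ N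
    · obtain ⟨hlN, hN⟩ := hb2
      rw [hlN] at h ⊢
      have hij : (⟨N-2, by omega⟩ : Fin N) ≠ ⟨N-1, by omega⟩ :=
        Fin.ne_of_val_ne (show N-2 ≠ N-1 by omega)
      rw [eD_N_eq N hN] at h ⊢
      split_ifs at h with hc
      obtain rfl := (Option.some.injEq _ _).mp h
      simp [Function.update_of_ne hij]
    · rw [eD_out N l hb hb2] at h; exact absurd h (by simp)

lemma tfD_eq (N l : ℕ) (u v : Seq N) :
    tfD N l (u, v) =
      if eD N l u = none ∧ ¬ (fD N l v = none) then (fD N l v).map (fun y => (u, y))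
      else (fD N l u).map (fun x => (x, v)) := by
  unfold tfD
  by_cases h1 : eD N l u = none <;> by_cases h2 : fD N l v = none
  · rw [opMax_none _ _ h1, opMax_none _ _ h2, if_neg (by omega), if_neg (by simp [h1, h2])]
  · obtain ⟨y, hy⟩ := Option.ne_none_iff_exists'.mp h2
    rw [opMax_none _ _ h1, opMax_some _ (fD_twice N l) _ _ hy,
      if_pos (by omega), if_pos ⟨h1, h2⟩]
  · obtain ⟨x, hx⟩ := Option.ne_none_iff_exists'.mp h1
    rw [opMax_some _ (eD_twice N l) _ _ hx, opMax_none _ _ h2,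
      if_neg (by omega), if_neg (by simp [h1, h2])]
  · obtain ⟨x, hx⟩ := Option.ne_none_iff_exists'.mp h1
    obtain ⟨y, hy⟩ := Option.ne_none_iff_exists'.mp h2
    rw [opMax_some _ (eD_twice N l) _ _ hx, opMax_some _ (fD_twice N l) _ _ hy,
      if_neg (by omega), if_neg (by simp [h1, h2])]

lemma teD_eq (N l : ℕ) (u v : Seq N) :
    teD N l (u, v) =
      if eD N l u = none ∨ ¬ (fD N l v = none) then (eD N l v).map (fun y => (u, y))
      else (eD N l u).map (fun x => (x, v)) := by
  unfold teD
  by_cases h1 : eD N l u = none <;> by_cases h2 : fD N l v = none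
  · rw [opMax_none _ _ h1, opMax_none _ _ h2, if_pos (by omega), if_pos (by simp [h1])]
  · obtain ⟨y, hy⟩ := Option.ne_none_iff_exists'.mp h2
    rw [opMax_none _ _ h1, opMax_some _ (fD_twice N l) _ _ hy,
      if_pos (by omega), if_pos (by simp [h1])]
  · obtain ⟨x, hx⟩ := Option.ne_none_iff_exists'.mp h1
    rw [opMax_some _ (eD_twice N l) _ _ hx, opMax_none _ _ h2,
      if_neg (by omega), if_neg (by simp [h1, h2])]
  · obtain ⟨x, hx⟩ := Option.ne_none_iff_exists'.mp h1
    obtain ⟨y, hy⟩ := Option.ne_none_iff_exists'.mp h2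
    rw [opMax_some _ (eD_twice N l) _ _ hx, opMax_some _ (fD_twice N l) _ _ hy,
      if_pos (by omega), if_pos (by simp [h2])]

end OpChar

section Invariant

/-- Letter value: `(+,−) ↦ 1`, `(−,+) ↦ −1`, else `0`. -/
def svI (N : ℕ) (u v : Seq N) (i : ℕ) : ℤ :=
  if h : i < N then
    (if u ⟨i, h⟩ = true ∧ v ⟨i, h⟩ = false then 1 else 0)
    - (if u ⟨i, h⟩ = false ∧ v ⟨i, h⟩ = true then 1 else 0)
  else 0

/-- Prefix sums. -/
def PS (N : ℕ) (u v : Seq N) (j : ℕ) : ℤ := ∑ i ∈ Finset.range j, svI N u v i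

/-- Max prefix sum. -/
def Mx (N : ℕ) (u v : Seq N) : ℤ :=
  (Finset.range (N+1)).sup' Finset.nonempty_range_add_one (PS N u v)

lemma PS_zero (N : ℕ) (u v : Seq N) : PS N u v 0 = 0 := rfl

lemma PS_succ (N : ℕ) (u v : Seq N) (j : ℕ) :
    PS N u v (j+1) = PS N u v j + svI N u v j := Finset.sum_range_succ _ _

lemma PS_congr (N : ℕ) (u v u' v' : Seq N) (j : ℕ)
    (h : ∀ i, i < j → svI N u' v' i = svI N u v i) :
    PS N u' v' j = PS N u v j :=
  Finset.sum_congr rfl (fun i hi => h i (Finset.mem_range.mp hi))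

lemma PS_split (N : ℕ) (u v : Seq N) (t j : ℕ) (h : t ≤ j) :
    PS N u v j = PS N u v t + ∑ i ∈ Finset.Ico t j, svI N u v i := by
  simp only [PS, Finset.range_eq_Ico]
  rw [← Finset.sum_Ico_consecutive _ (Nat.zero_le t) h]

lemma PS_succ2 (N : ℕ) (u v : Seq N) (j : ℕ) :
    PS N u v (j+2) = PS N u v (j+1) + svI N u v (j+1) := by
  show PS N u v ((j+1)+1) = _
  exact PS_succ N u v (j+1)

lemma mx_local (N t : ℕ) (ht : t + 2 ≤ N) (u v u' v' : Seq N)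
    (hoff : ∀ m, m ≠ t → m ≠ t+1 → svI N u' v' m = svI N u v m)
    (hsum : svI N u' v' t + svI N u' v' (t+1) = svI N u v t + svI N u v (t+1))
    (hb1 : svI N u v t ≤ 0 ∨ 0 ≤ svI N u v (t+1))
    (hb2 : svI N u' v' t ≤ 0 ∨ 0 ≤ svI N u' v' (t+1)) :
    Mx N u' v' = Mx N u v := by
  have hlow : ∀ j, j ≤ t → PS N u' v' j = PS N u v j :=
    fun j hj => PS_congr _ _ _ _ _ _ (fun i hi => hoff i (by omega) (by omega))
  have ht2 : PS N u' v' (t+2) = PS N u v (t+2) := by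
    rw [PS_succ2, PS_succ2, PS_succ, PS_succ, hlow t le_rfl]
    omega
  have hhigh : ∀ j, t+2 ≤ j → PS N u' v' j = PS N u v j := by
    intro j hj
    rw [PS_split N u' v' (t+2) j hj, PS_split N u v (t+2) j hj, ht2]
    congr 1
    exact Finset.sum_congr rfl fun i hi => by
      have := Finset.mem_Ico.mp hi
      exact hoff i (by omega) (by omega)
  have kOld : PS N u v (t+1) ≤ max (PS N u v t) (PS N u v (t+2)) := by
    rcases hb1 with h | h
    · exact le_max_of_le_left (by rw [PS_succ]; linarith)
    · exact le_max_of_le_right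
        (by rw [PS_succ2, PS_succ]; linarith)
  have kNew : PS N u' v' (t+1) ≤ max (PS N u' v' t) (PS N u' v' (t+2)) := by
    rcases hb2 with h | h
    · exact le_max_of_le_left (by rw [PS_succ]; linarith)
    · exact le_max_of_le_right
        (by rw [PS_succ2, PS_succ]; linarith)
  have hne : ((Finset.range (N+1)).erase (t+1)).Nonempty :=
    ⟨t, by simp [Finset.mem_erase, Finset.mem_range]; omega⟩
  have herase : ∀ w z : Seq N, PS N w z (t+1) ≤ max (PS N w z t) (PS N w z (t+2)) →
      Mx N w z = ((Finset.range (N+1)).erase (t+1)).sup' hne (PS N w z) := by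
    intro w z hk
    apply le_antisymm
    · apply Finset.sup'_le
      intro j hj
      rcases eq_or_ne j (t+1) with rfl | hjne
      · refine hk.trans (max_le (Finset.le_sup' _ ?_) (Finset.le_sup' _ ?_)) <;>
          · simp only [Finset.mem_erase, Finset.mem_range]
            omega
      · exact Finset.le_sup' _ (by
          simp only [Finset.mem_range] at hj
          simp only [Finset.mem_erase, Finset.mem_range]
          omega)
    · exact Finset.sup'_le _ _ fun j hj => Finset.le_sup' _ (Finset.mem_of_mem_erase hj)
  rw [herase u v kOld, herase u' v' kNew]
  apply Finset.sup'_congr hne rfl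
  intro j hj
  simp only [Finset.mem_erase, Finset.mem_range] at hj
  rcases (by omega : j ≤ t ∨ t + 2 ≤ j) with h | h
  · exact hlow j h
  · exact hhigh j h

lemma mx_end (t : ℕ) (u v u' v' : Seq (t+2))
    (hoff : ∀ m, m ≠ t → m ≠ t+1 → svI (t+2) u' v' m = svI (t+2) u v m)
    (a b a' b' : ℤ)
    (h1 : svI (t+2) u v t = a) (h2 : svI (t+2) u v (t+1) = b)
    (h3 : svI (t+2) u' v' t = a') (h4 : svI (t+2) u' v' (t+1) = b')
    (hpat : (a = 0 ∧ b = 0 ∧ a' = -1 ∧ b' = -1) ∨ (a = -1 ∧ b = -1 ∧ a' = 0 ∧ b' = 0) ∨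
            (a = -1 ∧ b = 0 ∧ a' = 0 ∧ b' = 1) ∨ (a = 0 ∧ b = 1 ∧ a' = -1 ∧ b' = 0) ∨
            (a = 0 ∧ b = -1 ∧ a' = 1 ∧ b' = 0) ∨ (a = 1 ∧ b = 0 ∧ a' = 0 ∧ b' = -1))
    (hpar : PS (t+2) u v (t+2) % 2 = 1 ∨ PS (t+2) u' v' (t+2) % 2 = 1) :
    (Mx (t+2) u' v').toNat / 2 = (Mx (t+2) u v).toNat / 2 := by
  have hM : ∀ w z : Seq (t+2), Mx (t+2) w z =
      max ((Finset.range (t+1)).sup' Finset.nonempty_range_add_one (PS (t+2) w z))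
        (max (PS (t+2) w z (t+1)) (PS (t+2) w z (t+2))) := by
    intro w z
    apply le_antisymm
    · apply Finset.sup'_le
      intro j hj
      simp only [Finset.mem_range] at hj
      rcases (by omega : j ≤ t ∨ j = t+1 ∨ j = t+2) with h | h | h
      · exact le_max_of_le_left (Finset.le_sup' _ (by simp only [Finset.mem_range]; omega))
      · subst h; exact le_max_of_le_right (le_max_left _ _)
      · subst h; exact le_max_of_le_right (le_max_right _ _)
    · apply max_le
      · exact Finset.sup'_le _ _ fun j hj => Finset.le_sup' _ (by
          simp only [Finset.mem_range] at hj ⊢; omega)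
      · exact max_le (Finset.le_sup' _ (by simp only [Finset.mem_range]; omega))
          (Finset.le_sup' _ (by simp only [Finset.mem_range]; omega))
  have hlow : ∀ j, j ≤ t → PS (t+2) u' v' j = PS (t+2) u v j :=
    fun j hj => PS_congr _ _ _ _ _ _ (fun i hi => hoff i (by omega) (by omega))
  have hMeq : (Finset.range (t+1)).sup' Finset.nonempty_range_add_one (PS (t+2) u' v') =
      (Finset.range (t+1)).sup' Finset.nonempty_range_add_one (PS (t+2) u v) := by
    apply Finset.sup'_congr _ rfl
    intro j hj
    simp only [Finset.mem_range] at hj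
    exact hlow j (by omega)
  set M := (Finset.range (t+1)).sup' Finset.nonempty_range_add_one (PS (t+2) u v) with hMdef
  have hME : PS (t+2) u v t ≤ M :=
    Finset.le_sup' _ (by simp only [Finset.mem_range]; omega)
  have hM0 : (0:ℤ) ≤ M := by
    have := Finset.le_sup' (PS (t+2) u v) (by
      simp only [Finset.mem_range]; omega : 0 ∈ Finset.range (t+1))
    rwa [PS_zero] at this
  have e1 : PS (t+2) u v (t+1) = PS (t+2) u v t + a := by rw [PS_succ, h1]
  have e2 : PS (t+2) u v (t+2) = PS (t+2) u v t + a + b := by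
    rw [PS_succ2, e1, h2]
  have e3 : PS (t+2) u' v' (t+1) = PS (t+2) u v t + a' := by
    rw [PS_succ, h3, hlow t le_rfl]
  have e4 : PS (t+2) u' v' (t+2) = PS (t+2) u v t + a' + b' := by
    rw [PS_succ2, e3, h4]
  rw [hM, hM, hMeq, e1, e2, e3, e4]
  rw [e2, e4] at hpar
  set E := PS (t+2) u v t with hE
  rcases hpat with ⟨rfl,rfl,rfl,rfl⟩ | ⟨rfl,rfl,rfl,rfl⟩ | ⟨rfl,rfl,rfl,rfl⟩ |
    ⟨rfl,rfl,rfl,rfl⟩ | ⟨rfl,rfl,rfl,rfl⟩ | ⟨rfl,rfl,rfl,rfl⟩ <;>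
    · simp only [max_def]
      split_ifs <;> omega

end Invariant

section Counting

lemma sum_split_pair {M : Type*} [AddCommMonoid M] {N : ℕ} (f : Fin N → M) (i j : Fin N)
    (hij : i ≠ j) :
    ∑ m, f m = f i + f j + ∑ m ∈ (Finset.univ.erase i).erase j, f m := by
  rw [← Finset.add_sum_erase _ f (Finset.mem_univ i),
    ← Finset.add_sum_erase _ f (Finset.mem_erase.mpr ⟨Ne.symm hij, Finset.mem_univ j⟩),
    ← add_assoc]

lemma mc_eq_sum (N : ℕ) (b : Seq N) :
    minusCount N b = ∑ m : Fin N, (if b m = false then 1 else 0) := by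
  rw [minusCount, Finset.card_filter]

lemma mc_flip2 (N : ℕ) (b : Seq N) (i j : Fin N) (hij : i ≠ j) (x y : Bool) :
    minusCount N (Function.update (Function.update b i x) j y)
      + (if b i = false then 1 else 0) + (if b j = false then 1 else 0)
    = minusCount N b + (if x = false then 1 else 0) + (if y = false then 1 else 0) := by
  rw [mc_eq_sum, mc_eq_sum, sum_split_pair _ i j hij,
    sum_split_pair (fun m => if b m = false then 1 else 0) i j hij]
  have hi : Function.update (Function.update b i x) j y i = x := by
    rw [Function.update_of_ne hij, Function.update_self]
  have hj : Function.update (Function.update b i x) j y j = y := Function.update_self _ _ _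
  have hrest : ∑ m ∈ (Finset.univ.erase i).erase j,
      (if Function.update (Function.update b i x) j y m = false then 1 else 0)
      = ∑ m ∈ (Finset.univ.erase i).erase j, (if b m = false then 1 else 0) := by
    apply Finset.sum_congr rfl
    intro m hm
    simp only [Finset.mem_erase] at hm
    rw [Function.update_of_ne hm.1, Function.update_of_ne hm.2.1]
  rw [hi, hj, hrest]
  omega

lemma psN_parity (N : ℕ) (u v : Seq N) :
    PS N u v N % 2 = ((minusCount N u : ℤ) + (minusCount N v : ℤ)) % 2 := by
  have hmc : ∀ w : Seq N, ((minusCount N w : ℤ)) =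
      ∑ i ∈ Finset.range N,
        (if h : i < N then (if w ⟨i, h⟩ = false then (1:ℤ) else 0) else 0) := by
    intro w
    rw [mc_eq_sum]
    push_cast
    rw [← Fin.sum_univ_eq_sum_range
      (fun i => if h : i < N then (if w ⟨i, h⟩ = false then (1:ℤ) else 0) else 0) N]
    apply Finset.sum_congr rfl
    intro i _
    simp [i.isLt]
  rw [hmc, hmc, ← Finset.sum_add_distrib, PS, Finset.sum_int_mod]
  conv_rhs => rw [Finset.sum_int_mod]
  congr 1
  apply Finset.sum_congr rfl
  intro i hi
  have hiN : i < N := Finset.mem_range.mp hi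
  cases hu : u ⟨i, hiN⟩ <;> cases hv : v ⟨i, hiN⟩ <;>
    simp [svI, hiN, hu, hv] <;> norm_num

lemma card_filter_le (N p : ℕ) :
    (Finset.univ.filter (fun i : Fin N => p ≤ (i : ℕ))).card = N - p := by
  rw [Finset.card_filter,
    Fin.sum_univ_eq_sum_range (fun m => if p ≤ m then 1 else 0) N, ← Finset.card_filter]
  have h : (Finset.range N).filter (fun m => p ≤ m) = Finset.Ico p N := by
    ext m
    simp only [Finset.mem_filter, Finset.mem_range, Finset.mem_Ico]
    omega
  rw [h, Nat.card_Ico]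

lemma mc_top (N : ℕ) : minusCount N (top N) = 0 := by
  simp [minusCount, top]

lemma mc_lowSeq (N k : ℕ) : minusCount N (lowSeq N k) = N - k := by
  rw [minusCount]
  have h : (Finset.univ.filter (fun i : Fin N => lowSeq N k i = false))
      = Finset.univ.filter (fun i : Fin N => k ≤ (i : ℕ)) := by
    ext i
    simp only [Finset.mem_filter, Finset.mem_univ, true_and, lowSeq,
      decide_eq_false_iff_not]
    omega
  rw [h, card_filter_le]

lemma mx_top_low (N k : ℕ) (hk : k ≤ N) :
    Mx N (top N) (lowSeq N k) = ((N - k : ℕ) : ℤ) := by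
  have hPS : ∀ j, j ≤ N → PS N (top N) (lowSeq N k) j = ((j - min j k : ℕ) : ℤ) := by
    intro j hj
    induction j with
    | zero => simp [PS_zero]
    | succ n ih =>
      rw [PS_succ, ih (by omega)]
      have hn : n < N := by omega
      have hsv : svI N (top N) (lowSeq N k) n = if n < k then 0 else 1 := by
        by_cases hnk : n < k <;> simp [svI, hn, top, lowSeq, hnk]
      rw [hsv]
      by_cases hnk : n < k <;> simp [hnk] <;> push_cast <;> omega
  apply le_antisymm
  · apply Finset.sup'_le
    intro j hj
    simp only [Finset.mem_range] at hj
    rw [hPS j (by omega)]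
    have : j - min j k ≤ N - k := by omega
    exact_mod_cast this
  · have h := Finset.le_sup' (PS N (top N) (lowSeq N k))
      (by simp only [Finset.mem_range]; omega : N ∈ Finset.range (N+1))
    rwa [hPS N le_rfl, show min N k = k by omega] at h

end Counting

section Kernels

lemma mc_pair (N : ℕ) (b b' : Seq N) (i j : Fin N) (hij : i ≠ j)
    (hoff : ∀ m : Fin N, m ≠ i → m ≠ j → b' m = b m) :
    minusCount N b' + (if b i = false then 1 else 0) + (if b j = false then 1 else 0)
    = minusCount N b + (if b' i = false then 1 else 0) + (if b' j = false then 1 else 0) := by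
  rw [mc_eq_sum, mc_eq_sum, sum_split_pair (fun m => if b' m = false then 1 else 0) i j hij,
    sum_split_pair (fun m => if b m = false then 1 else 0) i j hij]
  have hrest : ∑ m ∈ (Finset.univ.erase i).erase j, (if b' m = false then 1 else 0)
      = ∑ m ∈ (Finset.univ.erase i).erase j, (if b m = false then 1 else 0) := by
    apply Finset.sum_congr rfl
    intro m hm
    simp only [Finset.mem_erase] at hm
    rw [hoff m hm.2.1 hm.1]
  rw [hrest]
  omega

lemma svI_eval (N : ℕ) (u v : Seq N) (m : ℕ) (hm : m < N) :
    svI N u v m = (if u ⟨m, hm⟩ = true ∧ v ⟨m, hm⟩ = false then 1 else 0)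
      - (if u ⟨m, hm⟩ = false ∧ v ⟨m, hm⟩ = true then 1 else 0) := dif_pos hm

lemma svI_off (N : ℕ) (u u' v v' : Seq N)
    (hu : ∀ m : Fin N, (m : ℕ) ≠ t → (m : ℕ) ≠ t+1 → u' m = u m)
    (hv : ∀ m : Fin N, (m : ℕ) ≠ t → (m : ℕ) ≠ t+1 → v' m = v m) :
    ∀ m, m ≠ t → m ≠ t+1 → svI N u' v' m = svI N u v m := by
  intro m h1 h2
  unfold svI
  by_cases hm : m < N
  · rw [dif_pos hm, dif_pos hm, hu ⟨m, hm⟩ h1 h2, hv ⟨m, hm⟩ h1 h2]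
  · rw [dif_neg hm, dif_neg hm]

lemma kernU (N t : ℕ) (hti : t < N) (htj : t + 1 < N) (u u' v : Seq N)
    (hui : u ⟨t, hti⟩ = false) (huj : u ⟨t+1, htj⟩ = true)
    (hui' : u' ⟨t, hti⟩ = true) (huj' : u' ⟨t+1, htj⟩ = false)
    (hoff : ∀ m : Fin N, (m : ℕ) ≠ t → (m : ℕ) ≠ t+1 → u' m = u m)
    (hside : ¬ (v ⟨t, hti⟩ = false ∧ v ⟨t+1, htj⟩ = true)) :
    minusCount N u' = minusCount N u ∧ Mx N u' v = Mx N u v := by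
  have hij : (⟨t, hti⟩ : Fin N) ≠ ⟨t+1, htj⟩ := Fin.ne_of_val_ne (show t ≠ t+1 by omega)
  have hoff' : ∀ m : Fin N, m ≠ ⟨t, hti⟩ → m ≠ ⟨t+1, htj⟩ → u' m = u m := by
    intro m h1 h2
    exact hoff m (fun hc => h1 (Fin.ext hc)) (fun hc => h2 (Fin.ext hc))
  constructor
  · have h := mc_pair N u u' ⟨t, hti⟩ ⟨t+1, htj⟩ hij hoff'
    rw [hui, huj, hui', huj'] at h
    simp at h
    omega
  · have hsvoff : ∀ m, m ≠ t → m ≠ t+1 → svI N u' v m = svI N u v m :=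
      svI_off N u u' v v hoff (fun _ _ _ => rfl)
    have ht2 : t + 2 ≤ N := htj
    cases hvi : v ⟨t, hti⟩ <;> cases hvj : v ⟨t+1, htj⟩
    -- (false, false)
    · have s1 : svI N u v t = 0 := by rw [svI_eval N u v t hti, hui, hvi]; norm_num
      have s2 : svI N u v (t+1) = 1 := by rw [svI_eval N u v (t+1) htj, huj, hvj]; norm_num
      have s3 : svI N u' v t = 1 := by rw [svI_eval N u' v t hti, hui', hvi]; norm_num
      have s4 : svI N u' v (t+1) = 0 := by rw [svI_eval N u' v (t+1) htj, huj', hvj]; norm_num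
      exact mx_local N t ht2 u v u' v hsvoff (by omega) (by omega) (by omega)
    -- (false, true) : excluded
    · exact absurd ⟨hvi, hvj⟩ hside
    -- (true, false)
    · have s1 : svI N u v t = -1 := by rw [svI_eval N u v t hti, hui, hvi]; norm_num
      have s2 : svI N u v (t+1) = 1 := by rw [svI_eval N u v (t+1) htj, huj, hvj]; norm_num
      have s3 : svI N u' v t = 0 := by rw [svI_eval N u' v t hti, hui', hvi]; norm_num
      have s4 : svI N u' v (t+1) = 0 := by rw [svI_eval N u' v (t+1) htj, huj', hvj]; norm_num
      exact mx_local N t ht2 u v u' v hsvoff (by omega) (by omega) (by omega)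
    -- (true, true)
    · have s1 : svI N u v t = -1 := by rw [svI_eval N u v t hti, hui, hvi]; norm_num
      have s2 : svI N u v (t+1) = 0 := by rw [svI_eval N u v (t+1) htj, huj, hvj]; norm_num
      have s3 : svI N u' v t = 0 := by rw [svI_eval N u' v t hti, hui', hvi]; norm_num
      have s4 : svI N u' v (t+1) = -1 := by rw [svI_eval N u' v (t+1) htj, huj', hvj]; norm_num
      exact mx_local N t ht2 u v u' v hsvoff (by omega) (by omega) (by omega)

lemma kernV (N t : ℕ) (hti : t < N) (htj : t + 1 < N) (u v v' : Seq N)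
    (hvi : v ⟨t, hti⟩ = false) (hvj : v ⟨t+1, htj⟩ = true)
    (hvi' : v' ⟨t, hti⟩ = true) (hvj' : v' ⟨t+1, htj⟩ = false)
    (hoff : ∀ m : Fin N, (m : ℕ) ≠ t → (m : ℕ) ≠ t+1 → v' m = v m)
    (hside : ¬ (u ⟨t, hti⟩ = true ∧ u ⟨t+1, htj⟩ = false)) :
    minusCount N v' = minusCount N v ∧ Mx N u v' = Mx N u v := by
  have hij : (⟨t, hti⟩ : Fin N) ≠ ⟨t+1, htj⟩ := Fin.ne_of_val_ne (show t ≠ t+1 by omega)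
  have hoff' : ∀ m : Fin N, m ≠ ⟨t, hti⟩ → m ≠ ⟨t+1, htj⟩ → v' m = v m := by
    intro m h1 h2
    exact hoff m (fun hc => h1 (Fin.ext hc)) (fun hc => h2 (Fin.ext hc))
  constructor
  · have h := mc_pair N v v' ⟨t, hti⟩ ⟨t+1, htj⟩ hij hoff'
    rw [hvi, hvj, hvi', hvj'] at h
    simp at h
    omega
  · have hsvoff : ∀ m, m ≠ t → m ≠ t+1 → svI N u v' m = svI N u v m :=
      svI_off N u u v v' (fun _ _ _ => rfl) hoff
    have ht2 : t + 2 ≤ N := htj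
    cases hui : u ⟨t, hti⟩ <;> cases huj : u ⟨t+1, htj⟩
    -- (false, false)
    · have s1 : svI N u v t = 0 := by rw [svI_eval N u v t hti, hui, hvi]; norm_num
      have s2 : svI N u v (t+1) = -1 := by rw [svI_eval N u v (t+1) htj, huj, hvj]; norm_num
      have s3 : svI N u v' t = -1 := by rw [svI_eval N u v' t hti, hui, hvi']; norm_num
      have s4 : svI N u v' (t+1) = 0 := by rw [svI_eval N u v' (t+1) htj, huj, hvj']; norm_num
      exact mx_local N t ht2 u v u v' hsvoff (by omega) (by omega) (by omega)
    -- (false, true)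
    · have s1 : svI N u v t = 0 := by rw [svI_eval N u v t hti, hui, hvi]; norm_num
      have s2 : svI N u v (t+1) = 0 := by rw [svI_eval N u v (t+1) htj, huj, hvj]; norm_num
      have s3 : svI N u v' t = -1 := by rw [svI_eval N u v' t hti, hui, hvi']; norm_num
      have s4 : svI N u v' (t+1) = 1 := by rw [svI_eval N u v' (t+1) htj, huj, hvj']; norm_num
      exact mx_local N t ht2 u v u v' hsvoff (by omega) (by omega) (by omega)
    -- (true, false) : excluded
    · exact absurd ⟨hui, huj⟩ hside
    -- (true, true)
    · have s1 : svI N u v t = 1 := by rw [svI_eval N u v t hti, hui, hvi]; norm_num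
      have s2 : svI N u v (t+1) = 0 := by rw [svI_eval N u v (t+1) htj, huj, hvj]; norm_num
      have s3 : svI N u v' t = 0 := by rw [svI_eval N u v' t hti, hui, hvi']; norm_num
      have s4 : svI N u v' (t+1) = 1 := by rw [svI_eval N u v' (t+1) htj, huj, hvj']; norm_num
      exact mx_local N t ht2 u v u v' hsvoff (by omega) (by omega) (by omega)

end Kernels

section EndKernels

lemma kernUEnd (t : ℕ) (u u' v : Seq (t+2))
    (hui : u ⟨t, by omega⟩ = false) (huj : u ⟨t+1, by omega⟩ = false)
    (hui' : u' ⟨t, by omega⟩ = true) (huj' : u' ⟨t+1, by omega⟩ = true)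
    (hoff : ∀ m : Fin (t+2), (m : ℕ) ≠ t → (m : ℕ) ≠ t+1 → u' m = u m)
    (hside : ¬ (v ⟨t, by omega⟩ = false ∧ v ⟨t+1, by omega⟩ = false))
    (hpar : PS (t+2) u v (t+2) % 2 = 1 ∨ PS (t+2) u' v (t+2) % 2 = 1) :
    minusCount (t+2) u' % 2 = minusCount (t+2) u % 2 ∧
    (Mx (t+2) u' v).toNat / 2 = (Mx (t+2) u v).toNat / 2 := by
  have hti : t < t + 2 := by omega
  have htj : t + 1 < t + 2 := by omega
  have hij : (⟨t, hti⟩ : Fin (t+2)) ≠ ⟨t+1, htj⟩ := Fin.ne_of_val_ne (show t ≠ t+1 by omega)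
  have hoff' : ∀ m : Fin (t+2), m ≠ ⟨t, hti⟩ → m ≠ ⟨t+1, htj⟩ → u' m = u m := by
    intro m h1 h2
    exact hoff m (fun hc => h1 (Fin.ext hc)) (fun hc => h2 (Fin.ext hc))
  constructor
  · have h := mc_pair (t+2) u u' ⟨t, hti⟩ ⟨t+1, htj⟩ hij hoff'
    rw [hui, huj, hui', huj'] at h
    simp at h
    omega
  · have hsvoff : ∀ m, m ≠ t → m ≠ t+1 → svI (t+2) u' v m = svI (t+2) u v m :=
      svI_off (t+2) u u' v v hoff (fun _ _ _ => rfl)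
    cases hvi : v ⟨t, hti⟩ <;> cases hvj : v ⟨t+1, htj⟩
    -- (false, false) : excluded
    · exact absurd ⟨hvi, hvj⟩ hside
    -- (false, true) : old (d,c) = (0,-1) → new (b,a) = (1,0)
    · have s1 : svI (t+2) u v t = 0 := by rw [svI_eval _ u v t hti, hui, hvi]; norm_num
      have s2 : svI (t+2) u v (t+1) = -1 := by rw [svI_eval _ u v (t+1) htj, huj, hvj]; norm_num
      have s3 : svI (t+2) u' v t = 1 := by rw [svI_eval _ u' v t hti, hui', hvi]; norm_num
      have s4 : svI (t+2) u' v (t+1) = 0 := by rw [svI_eval _ u' v (t+1) htj, huj', hvj]; norm_num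
      exact mx_end t u v u' v hsvoff _ _ _ _ s1 s2 s3 s4 (by norm_num) hpar
    -- (true, false) : old (c,d) = (-1,0) → new (a,b) = (0,1)
    · have s1 : svI (t+2) u v t = -1 := by rw [svI_eval _ u v t hti, hui, hvi]; norm_num
      have s2 : svI (t+2) u v (t+1) = 0 := by rw [svI_eval _ u v (t+1) htj, huj, hvj]; norm_num
      have s3 : svI (t+2) u' v t = 0 := by rw [svI_eval _ u' v t hti, hui', hvi]; norm_num
      have s4 : svI (t+2) u' v (t+1) = 1 := by rw [svI_eval _ u' v (t+1) htj, huj', hvj]; norm_num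
      exact mx_end t u v u' v hsvoff _ _ _ _ s1 s2 s3 s4 (by norm_num) hpar
    -- (true, true) : old (c,c) = (-1,-1) → new (a,a) = (0,0)
    · have s1 : svI (t+2) u v t = -1 := by rw [svI_eval _ u v t hti, hui, hvi]; norm_num
      have s2 : svI (t+2) u v (t+1) = -1 := by rw [svI_eval _ u v (t+1) htj, huj, hvj]; norm_num
      have s3 : svI (t+2) u' v t = 0 := by rw [svI_eval _ u' v t hti, hui', hvi]; norm_num
      have s4 : svI (t+2) u' v (t+1) = 0 := by rw [svI_eval _ u' v (t+1) htj, huj', hvj]; norm_num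
      exact mx_end t u v u' v hsvoff _ _ _ _ s1 s2 s3 s4 (by norm_num) hpar

lemma kernVEnd (t : ℕ) (u v v' : Seq (t+2))
    (hvi : v ⟨t, by omega⟩ = false) (hvj : v ⟨t+1, by omega⟩ = false)
    (hvi' : v' ⟨t, by omega⟩ = true) (hvj' : v' ⟨t+1, by omega⟩ = true)
    (hoff : ∀ m : Fin (t+2), (m : ℕ) ≠ t → (m : ℕ) ≠ t+1 → v' m = v m)
    (hside : ¬ (u ⟨t, by omega⟩ = true ∧ u ⟨t+1, by omega⟩ = true))
    (hpar : PS (t+2) u v (t+2) % 2 = 1 ∨ PS (t+2) u v' (t+2) % 2 = 1) :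
    minusCount (t+2) v' % 2 = minusCount (t+2) v % 2 ∧
    (Mx (t+2) u v').toNat / 2 = (Mx (t+2) u v).toNat / 2 := by
  have hti : t < t + 2 := by omega
  have htj : t + 1 < t + 2 := by omega
  have hij : (⟨t, hti⟩ : Fin (t+2)) ≠ ⟨t+1, htj⟩ := Fin.ne_of_val_ne (show t ≠ t+1 by omega)
  have hoff' : ∀ m : Fin (t+2), m ≠ ⟨t, hti⟩ → m ≠ ⟨t+1, htj⟩ → v' m = v m := by
    intro m h1 h2
    exact hoff m (fun hc => h1 (Fin.ext hc)) (fun hc => h2 (Fin.ext hc))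
  constructor
  · have h := mc_pair (t+2) v v' ⟨t, hti⟩ ⟨t+1, htj⟩ hij hoff'
    rw [hvi, hvj, hvi', hvj'] at h
    simp at h
    omega
  · have hsvoff : ∀ m, m ≠ t → m ≠ t+1 → svI (t+2) u v' m = svI (t+2) u v m :=
      svI_off (t+2) u u v v' (fun _ _ _ => rfl) hoff
    cases hui : u ⟨t, hti⟩ <;> cases huj : u ⟨t+1, htj⟩
    -- (false, false) : old (d,d) = (0,0) → new (c,c) = (-1,-1)
    · have s1 : svI (t+2) u v t = 0 := by rw [svI_eval _ u v t hti, hui, hvi]; norm_num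
      have s2 : svI (t+2) u v (t+1) = 0 := by rw [svI_eval _ u v (t+1) htj, huj, hvj]; norm_num
      have s3 : svI (t+2) u v' t = -1 := by rw [svI_eval _ u v' t hti, hui, hvi']; norm_num
      have s4 : svI (t+2) u v' (t+1) = -1 := by rw [svI_eval _ u v' (t+1) htj, huj, hvj']; norm_num
      exact mx_end t u v u v' hsvoff _ _ _ _ s1 s2 s3 s4 (by norm_num) hpar
    -- (false, true) : old (d,b) = (0,1) → new (c,a) = (-1,0)
    · have s1 : svI (t+2) u v t = 0 := by rw [svI_eval _ u v t hti, hui, hvi]; norm_num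
      have s2 : svI (t+2) u v (t+1) = 1 := by rw [svI_eval _ u v (t+1) htj, huj, hvj]; norm_num
      have s3 : svI (t+2) u v' t = -1 := by rw [svI_eval _ u v' t hti, hui, hvi']; norm_num
      have s4 : svI (t+2) u v' (t+1) = 0 := by rw [svI_eval _ u v' (t+1) htj, huj, hvj']; norm_num
      exact mx_end t u v u v' hsvoff _ _ _ _ s1 s2 s3 s4 (by norm_num) hpar
    -- (true, false) : old (b,d) = (1,0) → new (a,c) = (0,-1)
    · have s1 : svI (t+2) u v t = 1 := by rw [svI_eval _ u v t hti, hui, hvi]; norm_num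
      have s2 : svI (t+2) u v (t+1) = 0 := by rw [svI_eval _ u v (t+1) htj, huj, hvj]; norm_num
      have s3 : svI (t+2) u v' t = 0 := by rw [svI_eval _ u v' t hti, hui, hvi']; norm_num
      have s4 : svI (t+2) u v' (t+1) = -1 := by rw [svI_eval _ u v' (t+1) htj, huj, hvj']; norm_num
      exact mx_end t u v u v' hsvoff _ _ _ _ s1 s2 s3 s4 (by norm_num) hpar
    -- (true, true) : excluded
    · exact absurd ⟨hui, huj⟩ hside

end EndKernels

section StepMain

lemma fD_succ_eq (N t : ℕ) (h2 : t + 2 ≤ N) (b : Seq N) :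
    fD N (t+1) b = if b ⟨t, by omega⟩ = false ∧ b ⟨t+1, by omega⟩ = true
      then some (Function.update (Function.update b ⟨t, by omega⟩ true) ⟨t+1, by omega⟩ false)
      else none := fD_lt_eq N (t+1) (by omega) (by omega) b

lemma eD_succ_eq (N t : ℕ) (h2 : t + 2 ≤ N) (b : Seq N) :
    eD N (t+1) b = if b ⟨t, by omega⟩ = true ∧ b ⟨t+1, by omega⟩ = false
      then some (Function.update (Function.update b ⟨t, by omega⟩ false) ⟨t+1, by omega⟩ true)
      else none := eD_lt_eq N (t+1) (by omega) (by omega) b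

lemma fD_succ_none (N t : ℕ) (h2 : t + 2 ≤ N) (b : Seq N) :
    fD N (t+1) b = none ↔ ¬ (b ⟨t, by omega⟩ = false ∧ b ⟨t+1, by omega⟩ = true) := by
  rw [fD_succ_eq N t h2]; split_ifs with h <;> simp [h]

lemma eD_succ_none (N t : ℕ) (h2 : t + 2 ≤ N) (b : Seq N) :
    eD N (t+1) b = none ↔ ¬ (b ⟨t, by omega⟩ = true ∧ b ⟨t+1, by omega⟩ = false) := by
  rw [eD_succ_eq N t h2]; split_ifs with h <;> simp [h]

lemma fD_end_eq (t : ℕ) (b : Seq (t+2)) :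
    fD (t+2) (t+2) b = if b ⟨t, by omega⟩ = false ∧ b ⟨t+1, by omega⟩ = false
      then some (Function.update (Function.update b ⟨t, by omega⟩ true) ⟨t+1, by omega⟩ true)
      else none := fD_N_eq (t+2) (by omega) b

lemma eD_end_eq (t : ℕ) (b : Seq (t+2)) :
    eD (t+2) (t+2) b = if b ⟨t, by omega⟩ = true ∧ b ⟨t+1, by omega⟩ = true
      then some (Function.update (Function.update b ⟨t, by omega⟩ false) ⟨t+1, by omega⟩ false)
      else none := eD_N_eq (t+2) (by omega) b

lemma fD_end_none (t : ℕ) (b : Seq (t+2)) :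
    fD (t+2) (t+2) b = none ↔ ¬ (b ⟨t, by omega⟩ = false ∧ b ⟨t+1, by omega⟩ = false) := by
  rw [fD_end_eq t]; split_ifs with h <;> simp [h]

lemma eD_end_none (t : ℕ) (b : Seq (t+2)) :
    eD (t+2) (t+2) b = none ↔ ¬ (b ⟨t, by omega⟩ = true ∧ b ⟨t+1, by omega⟩ = true) := by
  rw [eD_end_eq t]; split_ifs with h <;> simp [h]

lemma fD_N_none (N : ℕ) (hN : 2 ≤ N) (b : Seq N) :
    fD N N b = none ↔ ¬ (b ⟨N-2, by omega⟩ = false ∧ b ⟨N-1, by omega⟩ = false) := by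
  rw [fD_N_eq N hN]; split_ifs with h <;> simp [h]

lemma parity_ps (N : ℕ) (u v : Seq N) (h1 : Even (minusCount N u))
    (h2 : Odd (minusCount N v)) : PS N u v N % 2 = 1 := by
  rw [psN_parity]
  obtain ⟨a, ha⟩ := h1
  obtain ⟨b, hb⟩ := h2
  omega

lemma upd_i (N : ℕ) (b : Seq N) (i j : Fin N) (hij : i ≠ j) (x y : Bool) :
    Function.update (Function.update b i x) j y i = x := by
  rw [Function.update_of_ne hij, Function.update_self]

lemma upd_j (N : ℕ) (b : Seq N) (i j : Fin N) (x y : Bool) :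
    Function.update (Function.update b i x) j y j = y := Function.update_self _ _ _

lemma upd_off (N : ℕ) (b : Seq N) (i j m : Fin N) (hmi : m ≠ i) (hmj : m ≠ j) (x y : Bool) :
    Function.update (Function.update b i x) j y m = b m := by
  rw [Function.update_of_ne hmj, Function.update_of_ne hmi]

lemma step_main (N : ℕ) (hN : 2 ≤ N) (l : ℕ) (hl1 : 1 ≤ l) (hl2 : l ≤ N)
    (p q : Seq N × Seq N)
    (h : teD N l p = some q ∨ tfD N l p = some q) :
    minusCount N q.1 % 2 = minusCount N p.1 % 2 ∧
    minusCount N q.2 % 2 = minusCount N p.2 % 2 ∧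
    (Even (minusCount N p.1) ∧ Odd (minusCount N p.2) →
      (Mx N q.1 q.2).toNat / 2 = (Mx N p.1 p.2).toNat / 2) := by
  obtain ⟨u, v⟩ := p
  obtain ⟨u', v'⟩ := q
  simp only
  by_cases hlN : l + 1 ≤ N
  · obtain ⟨t, rfl⟩ : ∃ t, l = t + 1 := ⟨l - 1, by omega⟩
    have ht2 : t + 2 ≤ N := by omega
    have hti : t < N := by omega
    have htj : t + 1 < N := by omega
    have hij : (⟨t, hti⟩ : Fin N) ≠ ⟨t+1, htj⟩ := Fin.ne_of_val_ne (show t ≠ t+1 by omega)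
    rcases h with h | h
    · rw [teD_eq] at h
      split_ifs at h with hc
      · -- ẽ acts on v
        obtain ⟨y, hy, hq⟩ := Option.map_eq_some_iff.mp h
        injection hq with h1 h2; subst h1; subst h2
        rw [eD_succ_eq N t ht2] at hy
        split_ifs at hy with hcond
        obtain rfl := (Option.some.injEq _ _).mp hy
        have hside : ¬ (u ⟨t, hti⟩ = true ∧ u ⟨t+1, htj⟩ = false) := by
          rcases hc with hc | hc
          · exact (eD_succ_none N t ht2 u).mp hc
          · exact absurd ((fD_succ_none N t ht2 v).mpr (by simp [hcond.1])) hc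
        have hk := kernV N t hti htj u
          (Function.update (Function.update v ⟨t, hti⟩ false) ⟨t+1, htj⟩ true) v
          (upd_i N v _ _ hij false true) (upd_j N v _ _ false true)
          hcond.1 hcond.2
          (fun m h1 h2 => (upd_off N v _ _ m (fun hc' => h1 (congrArg Fin.val hc'))
            (fun hc' => h2 (congrArg Fin.val hc')) false true).symm)
          hside
        exact ⟨rfl, by rw [hk.1], fun _ => by rw [hk.2]⟩
      · -- ẽ acts on u
        push_neg at hc
        obtain ⟨x, hx, hq⟩ := Option.map_eq_some_iff.mp h
        injection hq with h1 h2; subst h1; subst h2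
        rw [eD_succ_eq N t ht2] at hx
        split_ifs at hx with hcond
        obtain rfl := (Option.some.injEq _ _).mp hx
        have hside : ¬ (v ⟨t, hti⟩ = false ∧ v ⟨t+1, htj⟩ = true) :=
          (fD_succ_none N t ht2 v).mp hc.2
        have hk := kernU N t hti htj
          (Function.update (Function.update u ⟨t, hti⟩ false) ⟨t+1, htj⟩ true) u v
          (upd_i N u _ _ hij false true) (upd_j N u _ _ false true)
          hcond.1 hcond.2
          (fun m h1 h2 => (upd_off N u _ _ m (fun hc' => h1 (congrArg Fin.val hc'))
            (fun hc' => h2 (congrArg Fin.val hc')) false true).symm)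
          hside
        exact ⟨by rw [hk.1], rfl, fun _ => by rw [hk.2]⟩
    · rw [tfD_eq] at h
      split_ifs at h with hc
      · -- f̃ acts on v
        obtain ⟨y, hy, hq⟩ := Option.map_eq_some_iff.mp h
        injection hq with h1 h2; subst h1; subst h2
        rw [fD_succ_eq N t ht2] at hy
        split_ifs at hy with hcond
        obtain rfl := (Option.some.injEq _ _).mp hy
        have hside : ¬ (u ⟨t, hti⟩ = true ∧ u ⟨t+1, htj⟩ = false) :=
          (eD_succ_none N t ht2 u).mp hc.1
        have hk := kernV N t hti htj u v
          (Function.update (Function.update v ⟨t, hti⟩ true) ⟨t+1, htj⟩ false)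
          hcond.1 hcond.2
          (upd_i N v _ _ hij true false) (upd_j N v _ _ true false)
          (fun m h1 h2 => upd_off N v _ _ m (fun hc' => h1 (congrArg Fin.val hc'))
            (fun hc' => h2 (congrArg Fin.val hc')) true false)
          hside
        exact ⟨rfl, by rw [hk.1], fun _ => by rw [hk.2]⟩
      · -- f̃ acts on u
        push_neg at hc
        obtain ⟨x, hx, hq⟩ := Option.map_eq_some_iff.mp h
        injection hq with h1 h2; subst h1; subst h2
        rw [fD_succ_eq N t ht2] at hx
        split_ifs at hx with hcond
        obtain rfl := (Option.some.injEq _ _).mp hx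
        have hedu : eD N (t+1) u = none :=
          (eD_succ_none N t ht2 u).mpr (by simp [hcond.1])
        have hside : ¬ (v ⟨t, hti⟩ = false ∧ v ⟨t+1, htj⟩ = true) :=
          (fD_succ_none N t ht2 v).mp (hc hedu)
        have hk := kernU N t hti htj u
          (Function.update (Function.update u ⟨t, hti⟩ true) ⟨t+1, htj⟩ false) v
          hcond.1 hcond.2
          (upd_i N u _ _ hij true false) (upd_j N u _ _ true false)
          (fun m h1 h2 => upd_off N u _ _ m (fun hc' => h1 (congrArg Fin.val hc'))
            (fun hc' => h2 (congrArg Fin.val hc')) true false)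
          hside
        exact ⟨by rw [hk.1], rfl, fun _ => by rw [hk.2]⟩
  · -- l = N
    have hlN' : l = N := by omega
    subst hlN'
    obtain ⟨t, rfl⟩ : ∃ t, l = t + 2 := ⟨l - 2, by omega⟩
    have hti : t < t + 2 := by omega
    have htj : t + 1 < t + 2 := by omega
    have hij : (⟨t, hti⟩ : Fin (t+2)) ≠ ⟨t+1, htj⟩ := Fin.ne_of_val_ne (show t ≠ t+1 by omega)
    rcases h with h | h
    · rw [teD_eq] at h
      split_ifs at h with hc
      · -- ẽ_N acts on v : (+,+) ↦ (−,−)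
        obtain ⟨y, hy, hq⟩ := Option.map_eq_some_iff.mp h
        injection hq with h1 h2; subst h1; subst h2
        rw [eD_end_eq t] at hy
        split_ifs at hy with hcond
        obtain rfl := (Option.some.injEq _ _).mp hy
        have hside : ¬ (u ⟨t, hti⟩ = true ∧ u ⟨t+1, htj⟩ = true) := by
          rcases hc with hc | hc
          · exact (eD_end_none t u).mp hc
          · exact absurd ((fD_end_none t v).mpr (by simp [hcond.1])) hc
        have hoffF : ∀ m : Fin (t+2), m ≠ ⟨t, hti⟩ → m ≠ ⟨t+1, htj⟩ →
            Function.update (Function.update v ⟨t, hti⟩ false) ⟨t+1, htj⟩ false m = v m :=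
          fun m h1 h2 => upd_off _ v _ _ m h1 h2 false false
        have hmcp := mc_pair (t+2) v
          (Function.update (Function.update v ⟨t, hti⟩ false) ⟨t+1, htj⟩ false)
          ⟨t, hti⟩ ⟨t+1, htj⟩ hij hoffF
        rw [hcond.1, hcond.2, upd_i _ v _ _ hij false false, upd_j _ v _ _ false false]
          at hmcp
        simp only [if_neg, if_pos] at hmcp
        refine ⟨rfl, by omega, fun hpp => ?_⟩
        have hps : PS (t+2) u v (t+2) % 2 = 1 := parity_ps _ u v hpp.1 hpp.2
        have hk := kernVEnd t u
          (Function.update (Function.update v ⟨t, hti⟩ false) ⟨t+1, htj⟩ false) v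
          (upd_i _ v _ _ hij false false) (upd_j _ v _ _ false false)
          hcond.1 hcond.2
          (fun m h1 h2 => ((hoffF m (fun hc' => h1 (congrArg Fin.val hc'))
            (fun hc' => h2 (congrArg Fin.val hc')))).symm)
          hside (Or.inr hps)
        exact hk.2.symm
      · -- ẽ_N acts on u : (+,+) ↦ (−,−)
        push_neg at hc
        obtain ⟨x, hx, hq⟩ := Option.map_eq_some_iff.mp h
        injection hq with h1 h2; subst h1; subst h2
        rw [eD_end_eq t] at hx
        split_ifs at hx with hcond
        obtain rfl := (Option.some.injEq _ _).mp hx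
        have hside : ¬ (v ⟨t, hti⟩ = false ∧ v ⟨t+1, htj⟩ = false) :=
          (fD_end_none t v).mp hc.2
        have hoffF : ∀ m : Fin (t+2), m ≠ ⟨t, hti⟩ → m ≠ ⟨t+1, htj⟩ →
            Function.update (Function.update u ⟨t, hti⟩ false) ⟨t+1, htj⟩ false m = u m :=
          fun m h1 h2 => upd_off _ u _ _ m h1 h2 false false
        have hmcp := mc_pair (t+2) u
          (Function.update (Function.update u ⟨t, hti⟩ false) ⟨t+1, htj⟩ false)
          ⟨t, hti⟩ ⟨t+1, htj⟩ hij hoffF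
        rw [hcond.1, hcond.2, upd_i _ u _ _ hij false false, upd_j _ u _ _ false false]
          at hmcp
        simp only [if_neg, if_pos] at hmcp
        refine ⟨by omega, rfl, fun hpp => ?_⟩
        have hps : PS (t+2) u v (t+2) % 2 = 1 := parity_ps _ u v hpp.1 hpp.2
        have hk := kernUEnd t
          (Function.update (Function.update u ⟨t, hti⟩ false) ⟨t+1, htj⟩ false) u v
          (upd_i _ u _ _ hij false false) (upd_j _ u _ _ false false)
          hcond.1 hcond.2
          (fun m h1 h2 => ((hoffF m (fun hc' => h1 (congrArg Fin.val hc'))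
            (fun hc' => h2 (congrArg Fin.val hc')))).symm)
          hside (Or.inr hps)
        exact hk.2.symm
    · rw [tfD_eq] at h
      split_ifs at h with hc
      · -- f̃_N acts on v : (−,−) ↦ (+,+)
        obtain ⟨y, hy, hq⟩ := Option.map_eq_some_iff.mp h
        injection hq with h1 h2; subst h1; subst h2
        rw [fD_end_eq t] at hy
        split_ifs at hy with hcond
        obtain rfl := (Option.some.injEq _ _).mp hy
        have hside : ¬ (u ⟨t, hti⟩ = true ∧ u ⟨t+1, htj⟩ = true) :=
          (eD_end_none t u).mp hc.1
        have hoffF : ∀ m : Fin (t+2), m ≠ ⟨t, hti⟩ → m ≠ ⟨t+1, htj⟩ →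
            Function.update (Function.update v ⟨t, hti⟩ true) ⟨t+1, htj⟩ true m = v m :=
          fun m h1 h2 => upd_off _ v _ _ m h1 h2 true true
        have hmcp := mc_pair (t+2) v
          (Function.update (Function.update v ⟨t, hti⟩ true) ⟨t+1, htj⟩ true)
          ⟨t, hti⟩ ⟨t+1, htj⟩ hij hoffF
        rw [hcond.1, hcond.2, upd_i _ v _ _ hij true true, upd_j _ v _ _ true true]
          at hmcp
        simp only [if_neg, if_pos] at hmcp
        refine ⟨rfl, by omega, fun hpp => ?_⟩
        have hps : PS (t+2) u v (t+2) % 2 = 1 := parity_ps _ u v hpp.1 hpp.2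
        have hk := kernVEnd t u v
          (Function.update (Function.update v ⟨t, hti⟩ true) ⟨t+1, htj⟩ true)
          hcond.1 hcond.2
          (upd_i _ v _ _ hij true true) (upd_j _ v _ _ true true)
          (fun m h1 h2 => hoffF m (fun hc' => h1 (congrArg Fin.val hc'))
            (fun hc' => h2 (congrArg Fin.val hc')))
          hside (Or.inl hps)
        exact hk.2
      · -- f̃_N acts on u : (−,−) ↦ (+,+)
        push_neg at hc
        obtain ⟨x, hx, hq⟩ := Option.map_eq_some_iff.mp h
        injection hq with h1 h2; subst h1; subst h2
        rw [fD_end_eq t] at hx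
        split_ifs at hx with hcond
        obtain rfl := (Option.some.injEq _ _).mp hx
        have hedu : eD (t+2) (t+2) u = none :=
          (eD_end_none t u).mpr (by simp [hcond.1])
        have hside : ¬ (v ⟨t, hti⟩ = false ∧ v ⟨t+1, htj⟩ = false) :=
          (fD_end_none t v).mp (hc hedu)
        have hoffF : ∀ m : Fin (t+2), m ≠ ⟨t, hti⟩ → m ≠ ⟨t+1, htj⟩ →
            Function.update (Function.update u ⟨t, hti⟩ true) ⟨t+1, htj⟩ true m = u m :=
          fun m h1 h2 => upd_off _ u _ _ m h1 h2 true true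
        have hmcp := mc_pair (t+2) u
          (Function.update (Function.update u ⟨t, hti⟩ true) ⟨t+1, htj⟩ true)
          ⟨t, hti⟩ ⟨t+1, htj⟩ hij hoffF
        rw [hcond.1, hcond.2, upd_i _ u _ _ hij true true, upd_j _ u _ _ true true]
          at hmcp
        simp only [if_neg, if_pos] at hmcp
        refine ⟨by omega, rfl, fun hpp => ?_⟩
        have hps : PS (t+2) u v (t+2) % 2 = 1 := parity_ps _ u v hpp.1 hpp.2
        have hk := kernUEnd t u
          (Function.update (Function.update u ⟨t, hti⟩ true) ⟨t+1, htj⟩ true) v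
          hcond.1 hcond.2
          (upd_i _ u _ _ hij true true) (upd_j _ u _ _ true true)
          (fun m h1 h2 => hoffF m (fun hc' => h1 (congrArg Fin.val hc'))
            (fun hc' => h2 (congrArg Fin.val hc')))
          hside (Or.inl hps)
        exact hk.2

end StepMain

section Measure

def mu (N : ℕ) (u v : Seq N) : ℕ :=
  ∑ m : Fin N, ((if u m = true then 0 else 1) + (if v m = true then 0 else 1)) * (N - (m : ℕ))

lemma mu_comm (N : ℕ) (u v : Seq N) : mu N u v = mu N v u := by
  unfold mu
  exact Finset.sum_congr rfl fun m _ => by ring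

lemma mu_kern (N t : ℕ) (hti : t < N) (htj : t + 1 < N) (b b' w : Seq N)
    (hbi : b ⟨t, hti⟩ = false) (hbj : b ⟨t+1, htj⟩ = true)
    (hbi' : b' ⟨t, hti⟩ = true) (hbj' : b' ⟨t+1, htj⟩ = false)
    (hoff : ∀ m : Fin N, m ≠ ⟨t, hti⟩ → m ≠ ⟨t+1, htj⟩ → b' m = b m) :
    mu N b' w < mu N b w := by
  have hij : (⟨t, hti⟩ : Fin N) ≠ ⟨t+1, htj⟩ := Fin.ne_of_val_ne (show t ≠ t+1 by omega)
  unfold mu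
  rw [sum_split_pair (fun m => ((if b' m = true then 0 else 1) + (if w m = true then 0 else 1)) * (N - (m : ℕ))) ⟨t, hti⟩ ⟨t+1, htj⟩ hij,
    sum_split_pair (fun m => ((if b m = true then 0 else 1) + (if w m = true then 0 else 1)) * (N - (m : ℕ))) ⟨t, hti⟩ ⟨t+1, htj⟩ hij]
  have hrest : ∑ m ∈ (Finset.univ.erase ⟨t, hti⟩).erase ⟨t+1, htj⟩,
      ((if b' m = true then 0 else 1) + (if w m = true then 0 else 1)) * (N - (m : ℕ))
      = ∑ m ∈ (Finset.univ.erase ⟨t, hti⟩).erase ⟨t+1, htj⟩,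
      ((if b m = true then 0 else 1) + (if w m = true then 0 else 1)) * (N - (m : ℕ)) := by
    apply Finset.sum_congr rfl
    intro m hm
    simp only [Finset.mem_erase] at hm
    rw [hoff m hm.2.1 hm.1]
  rw [hrest, hbi, hbj, hbi', hbj']
  simp only [Fin.val_mk]
  cases hwi : w ⟨t, hti⟩ <;> cases hwj : w ⟨t+1, htj⟩ <;> simp [hwi, hwj] <;> omega

lemma mu_kern_end (t : ℕ) (b b' w : Seq (t+2))
    (hti : t < t + 2) (htj : t + 1 < t + 2)
    (hbi : b ⟨t, hti⟩ = false) (hbj : b ⟨t+1, htj⟩ = false)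
    (hbi' : b' ⟨t, hti⟩ = true) (hbj' : b' ⟨t+1, htj⟩ = true)
    (hoff : ∀ m : Fin (t+2), m ≠ ⟨t, hti⟩ → m ≠ ⟨t+1, htj⟩ → b' m = b m) :
    mu (t+2) b' w < mu (t+2) b w := by
  have hij : (⟨t, hti⟩ : Fin (t+2)) ≠ ⟨t+1, htj⟩ := Fin.ne_of_val_ne (show t ≠ t+1 by omega)
  unfold mu
  rw [sum_split_pair (fun m => ((if b' m = true then 0 else 1) + (if w m = true then 0 else 1)) * (t + 2 - (m : ℕ))) ⟨t, hti⟩ ⟨t+1, htj⟩ hij,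
    sum_split_pair (fun m => ((if b m = true then 0 else 1) + (if w m = true then 0 else 1)) * (t + 2 - (m : ℕ))) ⟨t, hti⟩ ⟨t+1, htj⟩ hij]
  have hrest : ∑ m ∈ (Finset.univ.erase ⟨t, hti⟩).erase ⟨t+1, htj⟩,
      ((if b' m = true then 0 else 1) + (if w m = true then 0 else 1)) * (t + 2 - (m : ℕ))
      = ∑ m ∈ (Finset.univ.erase ⟨t, hti⟩).erase ⟨t+1, htj⟩,
      ((if b m = true then 0 else 1) + (if w m = true then 0 else 1)) * (t + 2 - (m : ℕ)) := by
    apply Finset.sum_congr rfl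
    intro m hm
    simp only [Finset.mem_erase] at hm
    rw [hoff m hm.2.1 hm.1]
  rw [hrest, hbi, hbj, hbi', hbj']
  simp only [Fin.val_mk]
  cases hwi : w ⟨t, hti⟩ <;> cases hwj : w ⟨t+1, htj⟩ <;> simp [hwi, hwj] <;> omega

lemma mu_decrease (N : ℕ) (hN : 2 ≤ N) (l : ℕ) (hl1 : 1 ≤ l) (hl2 : l ≤ N)
    (u v : Seq N) (q : Seq N × Seq N) (h : tfD N l (u, v) = some q) :
    mu N q.1 q.2 < mu N u v := by
  obtain ⟨u', v'⟩ := q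
  simp only
  rw [tfD_eq] at h
  by_cases hlN : l + 1 ≤ N
  · obtain ⟨t, rfl⟩ : ∃ t, l = t + 1 := ⟨l - 1, by omega⟩
    have ht2 : t + 2 ≤ N := by omega
    have hti : t < N := by omega
    have htj : t + 1 < N := by omega
    have hij : (⟨t, hti⟩ : Fin N) ≠ ⟨t+1, htj⟩ := Fin.ne_of_val_ne (show t ≠ t+1 by omega)
    split_ifs at h with hc
    · obtain ⟨y, hy, hq⟩ := Option.map_eq_some_iff.mp h
      injection hq with h1 h2; subst h1; subst h2
      rw [fD_succ_eq N t ht2] at hy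
      split_ifs at hy with hcond
      obtain rfl := (Option.some.injEq _ _).mp hy
      rw [mu_comm N u _, mu_comm N u v]
      exact mu_kern N t hti htj v _ u hcond.1 hcond.2
        (upd_i N v _ _ hij true false) (upd_j N v _ _ true false)
        (fun m h1 h2 => upd_off N v _ _ m h1 h2 true false)
    · obtain ⟨x, hx, hq⟩ := Option.map_eq_some_iff.mp h
      injection hq with h1 h2; subst h1; subst h2
      rw [fD_succ_eq N t ht2] at hx
      split_ifs at hx with hcond
      obtain rfl := (Option.some.injEq _ _).mp hx
      exact mu_kern N t hti htj u _ v hcond.1 hcond.2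
        (upd_i N u _ _ hij true false) (upd_j N u _ _ true false)
        (fun m h1 h2 => upd_off N u _ _ m h1 h2 true false)
  · have hlN' : l = N := by omega
    subst hlN'
    obtain ⟨t, rfl⟩ : ∃ t, l = t + 2 := ⟨l - 2, by omega⟩
    have hti : t < t + 2 := by omega
    have htj : t + 1 < t + 2 := by omega
    have hij : (⟨t, hti⟩ : Fin (t+2)) ≠ ⟨t+1, htj⟩ := Fin.ne_of_val_ne (show t ≠ t+1 by omega)
    split_ifs at h with hc
    · obtain ⟨y, hy, hq⟩ := Option.map_eq_some_iff.mp h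
      injection hq with h1 h2; subst h1; subst h2
      rw [fD_end_eq t] at hy
      split_ifs at hy with hcond
      obtain rfl := (Option.some.injEq _ _).mp hy
      rw [mu_comm _ u _, mu_comm _ u v]
      exact mu_kern_end t v _ u hti htj hcond.1 hcond.2
        (upd_i _ v _ _ hij true true) (upd_j _ v _ _ true true)
        (fun m h1 h2 => upd_off _ v _ _ m h1 h2 true true)
    · obtain ⟨x, hx, hq⟩ := Option.map_eq_some_iff.mp h
      injection hq with h1 h2; subst h1; subst h2
      rw [fD_end_eq t] at hx
      split_ifs at hx with hcond
      obtain rfl := (Option.some.injEq _ _).mp hx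
      exact mu_kern_end t u _ v hti htj hcond.1 hcond.2
        (upd_i _ u _ _ hij true true) (upd_j _ u _ _ true true)
        (fun m h1 h2 => upd_off _ u _ _ m h1 h2 true true)

end Measure

section LowestWeight

lemma suffix_false (N : ℕ) (b : Seq N)
    (hstep : ∀ t (ht2 : t + 2 ≤ N), b ⟨t, by omega⟩ = false → b ⟨t+1, by omega⟩ = false)
    (p : ℕ) (hp : p < N) (hbp : b ⟨p, hp⟩ = false) :
    ∀ m : Fin N, p ≤ (m : ℕ) → b m = false := by
  have key : ∀ d, ∀ hd : p + d < N, b ⟨p + d, hd⟩ = false := by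
    intro d
    induction d with
    | zero => intro hd; exact hbp
    | succ n ih => intro hd; exact hstep (p + n) (by omega) (ih (by omega))
  intro m hpm
  have hm : m = ⟨p + ((m : ℕ) - p), by omega⟩ := Fin.ext (by simp; omega)
  rw [hm]
  exact key _ _

lemma lw_forward (N : ℕ) (hN : 2 ≤ N) (x y : Seq N)
    (hx : Even (minusCount N x)) (hy : Odd (minusCount N y))
    (hall : ∀ l, 1 ≤ l → l ≤ N → tfD N l (x, y) = none) :
    x = top N ∧ ∃ k, k ≤ N - 1 ∧ k % 2 = (N - 1) % 2 ∧ y = lowSeq N k := by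
  -- from tfD = none derive fD x = none and the conditional on y
  have hfx : ∀ l, 1 ≤ l → l ≤ N → fD N l x = none := by
    intro l h1 h2
    have h := hall l h1 h2
    rw [tfD_eq] at h
    split_ifs at h with hc
    · exact absurd (Option.map_eq_none_iff.mp h) hc.2
    · exact Option.map_eq_none_iff.mp h
  have hfy : ∀ l, 1 ≤ l → l ≤ N → eD N l x = none → fD N l y = none := by
    intro l h1 h2 hex
    have h := hall l h1 h2
    rw [tfD_eq] at h
    split_ifs at h with hc
    · exact absurd (Option.map_eq_none_iff.mp h) hc.2
    · push_neg at hc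
      exact hc hex
  have hx_step : ∀ t (ht2 : t + 2 ≤ N), x ⟨t, by omega⟩ = false → x ⟨t+1, by omega⟩ = false := by
    intro t ht2 hxf
    have h := (fD_succ_none N t ht2 x).mp (hfx (t+1) (by omega) (by omega))
    cases hb : x ⟨t+1, by omega⟩
    · rfl
    · exact absurd ⟨hxf, hb⟩ h
  -- x has no false entry
  have hxtop : ∀ i : Fin N, x i = true := by
    by_contra hnot
    push_neg at hnot
    obtain ⟨i0, hi0⟩ := hnot
    have hi0' : x i0 = false := by cases hb : x i0; rfl; exact absurd hb hi0
    have hPex : ∃ n, ∃ hn : n < N, x ⟨n, hn⟩ = false := ⟨i0, i0.isLt, by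
      rw [show (⟨(i0 : ℕ), i0.isLt⟩ : Fin N) = i0 from Fin.ext rfl]; exact hi0'⟩
    classical
    set p := Nat.find hPex with hpdef
    obtain ⟨hp, hxp⟩ := Nat.find_spec hPex
    have hchar : ∀ i : Fin N, x i = false ↔ p ≤ (i : ℕ) := by
      intro i
      constructor
      · intro hif
        exact Nat.find_min' hPex ⟨i.isLt, by
          rw [show (⟨(i : ℕ), i.isLt⟩ : Fin N) = i from Fin.ext rfl]; exact hif⟩
      · exact suffix_false N x hx_step p hp hxp i
    have hmc : minusCount N x = N - p := by
      rw [minusCount]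
      rw [show (Finset.univ.filter (fun i : Fin N => x i = false))
          = Finset.univ.filter (fun i : Fin N => p ≤ (i : ℕ)) from
        Finset.filter_congr (fun i _ => by simp [hchar i])]
      exact card_filter_le N p
    have hple : p ≤ N - 2 := by
      have h1 : 1 ≤ N - p := by omega
      have h2 : Even (N - p) := hmc ▸ hx
      rw [Nat.even_iff] at h2
      omega
    have hxN2 : x ⟨N-2, by omega⟩ = false :=
      suffix_false N x hx_step p hp hxp _ (by simp; omega)
    have hxN1 : x ⟨N-1, by omega⟩ = false :=
      suffix_false N x hx_step p hp hxp _ (by simp; omega)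
    have h := (fD_N_none N hN x).mp (hfx N (by omega) le_rfl)
    exact h ⟨hxN2, hxN1⟩
  have hxtop' : x = top N := funext fun i => hxtop i
  refine ⟨hxtop', ?_⟩
  -- now y
  have hy_step : ∀ t (ht2 : t + 2 ≤ N), y ⟨t, by omega⟩ = false → y ⟨t+1, by omega⟩ = false := by
    intro t ht2 hyf
    have hex : eD N (t+1) x = none := by
      rw [eD_succ_none N t ht2]
      simp [hxtop]
    have h := (fD_succ_none N t ht2 y).mp (hfy (t+1) (by omega) (by omega) hex)
    cases hb : y ⟨t+1, by omega⟩
    · rfl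
    · exact absurd ⟨hyf, hb⟩ h
  have hPex : ∃ n, ∃ hn : n < N, y ⟨n, hn⟩ = false := by
    by_contra hnone
    push_neg at hnone
    have : minusCount N y = 0 := by
      rw [minusCount, Finset.card_eq_zero, Finset.filter_eq_empty_iff]
      intro i _
      have := hnone (i : ℕ) i.isLt
      rw [show (⟨(i : ℕ), i.isLt⟩ : Fin N) = i from Fin.ext rfl] at this
      simp [this]
    rw [this] at hy
    simp [Nat.odd_iff] at hy
  classical
  set p := Nat.find hPex with hpdef
  obtain ⟨hp, hyp⟩ := Nat.find_spec hPex
  have hchar : ∀ i : Fin N, y i = false ↔ p ≤ (i : ℕ) := by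
    intro i
    constructor
    · intro hif
      exact Nat.find_min' hPex ⟨i.isLt, by
        rw [show (⟨(i : ℕ), i.isLt⟩ : Fin N) = i from Fin.ext rfl]; exact hif⟩
    · exact suffix_false N y hy_step p hp hyp i
  have hmc : minusCount N y = N - p := by
    rw [minusCount]
    rw [show (Finset.univ.filter (fun i : Fin N => y i = false))
        = Finset.univ.filter (fun i : Fin N => p ≤ (i : ℕ)) from
      Finset.filter_congr (fun i _ => by simp [hchar i])]
    exact card_filter_le N p
  have hylow : y = lowSeq N p := by
    funext i
    rw [lowSeq]
    by_cases hip : (i : ℕ) < p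
    · have : ¬ (y i = false) := fun hc => by have := (hchar i).mp hc; omega
      simp [hip]
      cases hb : y i
      · exact absurd hb this
      · rfl
    · have : y i = false := (hchar i).mpr (by omega)
      simp [hip, this]
  have hodd := hmc ▸ hy
  rw [Nat.odd_iff] at hodd
  exact ⟨p, by omega, by omega, hylow⟩

lemma lw_back (N : ℕ) (hN : 2 ≤ N) (k : ℕ) (hk : k ≤ N - 1) :
    ∀ l, 1 ≤ l → l ≤ N → tfD N l (top N, lowSeq N k) = none := by
  intro l hl1 hl2
  rw [tfD_eq]
  by_cases hlN : l + 1 ≤ N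
  · obtain ⟨t, rfl⟩ : ∃ t, l = t + 1 := ⟨l - 1, by omega⟩
    have ht2 : t + 2 ≤ N := by omega
    have h1 : fD N (t+1) (top N) = none :=
      (fD_succ_none N t ht2 _).mpr (by simp [top])
    have h2 : fD N (t+1) (lowSeq N k) = none :=
      (fD_succ_none N t ht2 _).mpr (by
        simp only [lowSeq, decide_eq_false_iff_not, decide_eq_true_eq, not_and, not_lt]
        omega)
    split_ifs with hc
    · rw [h2]; rfl
    · rw [h1]; rfl
  · have hlN' : l = N := by omega
    subst hlN'
    obtain ⟨t, rfl⟩ : ∃ t, l = t + 2 := ⟨l - 2, by omega⟩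
    have hE : ¬ (eD (t+2) (t+2) (top (t+2)) = none) := by
      rw [eD_end_eq t]
      simp [top]
    have hFu : fD (t+2) (t+2) (top (t+2)) = none :=
      (fD_end_none t _).mpr (by simp [top])
    split_ifs with hc
    · exact absurd hc.1 hE
    · rw [hFu]; rfl

end LowestWeight

section Final

lemma connD_main (N : ℕ) (hN : 2 ≤ N) (p q : Seq N × Seq N) (h : ConnD N p q) :
    (minusCount N q.1 % 2 = minusCount N p.1 % 2 ∧
     minusCount N q.2 % 2 = minusCount N p.2 % 2) ∧
    (Even (minusCount N p.1) ∧ Odd (minusCount N p.2) →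
      (Mx N q.1 q.2).toNat / 2 = (Mx N p.1 p.2).toNat / 2) := by
  induction h with
  | rel a b hab =>
      obtain ⟨l, hl1, hl2, hop⟩ := hab
      have h := step_main N hN l hl1 hl2 a b hop
      exact ⟨⟨h.1, h.2.1⟩, h.2.2⟩
  | refl a => exact ⟨⟨rfl, rfl⟩, fun _ => rfl⟩
  | symm a b hab ih =>
      refine ⟨⟨ih.1.1.symm, ih.1.2.symm⟩, fun hg => ?_⟩
      have e1 := ih.1.1
      have e2 := ih.1.2
      have hb1 := Nat.even_iff.mp hg.1
      have hb2 := Nat.odd_iff.mp hg.2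
      have ha1 : Even (minusCount N a.1) := Nat.even_iff.mpr (by omega)
      have ha2 : Odd (minusCount N a.2) := Nat.odd_iff.mpr (by omega)
      exact (ih.2 ⟨ha1, ha2⟩).symm
  | trans a b c hab hbc ih1 ih2 =>
      refine ⟨⟨ih2.1.1.trans ih1.1.1, ih2.1.2.trans ih1.1.2⟩, fun hg => ?_⟩
      have e1 := ih1.1.1
      have e2 := ih1.1.2
      have ha1 := Nat.even_iff.mp hg.1
      have ha2 := Nat.odd_iff.mp hg.2
      have hb1 : Even (minusCount N b.1) := Nat.even_iff.mpr (by omega)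
      have hb2 : Odd (minusCount N b.2) := Nat.odd_iff.mpr (by omega)
      exact (ih2.2 ⟨hb1, hb2⟩).trans (ih1.2 hg)

lemma exists_conn (N : ℕ) (hN : 2 ≤ N) :
    ∀ n (u v : Seq N), mu N u v ≤ n → Even (minusCount N u) → Odd (minusCount N v) →
    ∃ k, k ≤ N - 1 ∧ k % 2 = (N - 1) % 2 ∧ ConnD N (u, v) (top N, lowSeq N k) := by
  intro n
  induction n with
  | zero =>
      intro u v hmu hu hv
      by_cases hall : ∀ l, 1 ≤ l → l ≤ N → tfD N l (u, v) = none
      · obtain ⟨rfl, k, hk1, hk2, rfl⟩ := lw_forward N hN u v hu hv hall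
        exact ⟨k, hk1, hk2, Relation.EqvGen.refl _⟩
      · push_neg at hall
        obtain ⟨l, hl1, hl2, hne⟩ := hall
        obtain ⟨q, hq⟩ := Option.ne_none_iff_exists'.mp hne
        have := mu_decrease N hN l hl1 hl2 u v q hq
        omega
  | succ n ih =>
      intro u v hmu hu hv
      by_cases hall : ∀ l, 1 ≤ l → l ≤ N → tfD N l (u, v) = none
      · obtain ⟨rfl, k, hk1, hk2, rfl⟩ := lw_forward N hN u v hu hv hall
        exact ⟨k, hk1, hk2, Relation.EqvGen.refl _⟩
      · push_neg at hall
        obtain ⟨l, hl1, hl2, hne⟩ := hall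
        obtain ⟨q, hq⟩ := Option.ne_none_iff_exists'.mp hne
        have hdec := mu_decrease N hN l hl1 hl2 u v q hq
        have hstep := step_main N hN l hl1 hl2 (u, v) q (Or.inr hq)
        dsimp only at hstep
        have hq1 : Even (minusCount N q.1) := Nat.even_iff.mpr (by
          have := Nat.even_iff.mp hu
          have h1 := hstep.1
          omega)
        have hq2 : Odd (minusCount N q.2) := Nat.odd_iff.mpr (by
          have := Nat.odd_iff.mp hv
          have h2 := hstep.2.1
          omega)
        obtain ⟨k, hk1, hk2, hconn⟩ := ih q.1 q.2 (by omega) hq1 hq2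
        refine ⟨k, hk1, hk2, Relation.EqvGen.trans _ _ _
          (Relation.EqvGen.rel _ _ ⟨l, hl1, hl2, Or.inr (by rw [hq])⟩) ?_⟩
        exact hconn

end Final
/-- Decomposition of `B_sp^+ ⊗ B_sp^−` (type `D_N`, `N ≥ 2`):
every element lies in the connected component of exactly one of the elements
`(+,…,+) ⊗ (+^k, −^{N−k})` with `0 ≤ k ≤ N−1`, `k ≡ N−1 (mod 2)`, and these elements
are precisely the elements killed by all tensor-product operators `f̃_l`, `1 ≤ l ≤ N`. -/
theorem BspPlus_tensor_BspMinus_decomposition (N : ℕ) (hN : 2 ≤ N) :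
    (∀ u v : Seq N, BspPlus N u → BspMinus N v →
      ∃! k, k ≤ N - 1 ∧ k % 2 = (N - 1) % 2 ∧ ConnD N (u, v) (top N, lowSeq N k)) ∧
    (∀ x y : Seq N, BspPlus N x → BspMinus N y →
      ((∀ l, 1 ≤ l → l ≤ N → tfD N l (x, y) = none) ↔
        (x = top N ∧ ∃ k, k ≤ N - 1 ∧ k % 2 = (N - 1) % 2 ∧ y = lowSeq N k))) := by
  constructor
  · intro u v hu hv
    obtain ⟨k, hk1, hk2, hconn⟩ := exists_conn N hN (mu N u v) u v le_rfl hu hv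
    refine ⟨k, ⟨hk1, hk2, hconn⟩, ?_⟩
    rintro k' ⟨hk1', hk2', hconn'⟩
    have hC : ConnD N (top N, lowSeq N k) (top N, lowSeq N k') :=
      Relation.EqvGen.trans _ _ _ (Relation.EqvGen.symm _ _ hconn) hconn'
    have hgood : Even (minusCount N (top N)) ∧ Odd (minusCount N (lowSeq N k)) := by
      constructor
      · rw [mc_top]; exact Even.zero
      · rw [mc_lowSeq, Nat.odd_iff]; omega
    have hinv := (connD_main N hN _ _ hC).2 (by dsimp only; exact hgood)
    dsimp only at hinv
    rw [mx_top_low N k' (by omega), mx_top_low N k (by omega)] at hinv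
    simp only [Int.toNat_natCast] at hinv
    omega
  · intro x y hx hy
    constructor
    · exact lw_forward N hN x y hx hy
    · rintro ⟨rfl, k, hk1, hk2, rfl⟩
      exact lw_back N hN k hk1

end CrystalPaper
end
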